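/- arXiv:2110.11114 — 4 statements merged into one kernel-verified Lean document; each statement's English description precedes it below -/
import Mathlib

section
/- Let (L, v) be a discretely valued skew field, c ∈ ℝ, and v_c the associated valuation on L[t] given by v_c(Σ hᵢtⁱ) = min{v(hᵢ)+i·c}. Let h, f ∈ L[t] with deg(h) ≥ deg(f) = d, and suppose v_c(f) = v(f_d) + d·c where f_d is the leading coefficient of f. If h = q·f + r with r = 0 or deg(r) < d, then v_c(q) ≥ v_c(h) − v_c(f) and v_c(r) ≥ v_c(h). -/
/-- The valuation `v` on `L` mapped into `WithTop ℝ`. -/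
noncomputable def vR {L : Type*} (v : L → WithTop ℤ) (x : L) : WithTop ℝ :=
  (v x).map (fun n : ℤ => (n : ℝ))

/-- For `c ∈ ℝ`, the Gauss-type valuation `v_c` on `L[t]` defined by
`v_c (Σ hᵢ tⁱ) = min { v hᵢ + i·c : hᵢ ≠ 0 }`. -/
noncomputable def vc {L : Type*} [DivisionRing L] (v : L → WithTop ℤ) (c : ℝ)
    (f : Polynomial L) : WithTop ℝ :=
  f.support.inf fun i => vR v (f.coeff i) + (((i : ℝ) * c : ℝ) : WithTop ℝ)

section Aux
variable {L : Type*} [DivisionRing L] {v : L → WithTop ℤ}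

lemma vR_eq_top (hv0 : ∀ x : L, v x = ⊤ ↔ x = 0) (x : L) : vR v x = ⊤ ↔ x = 0 := by
  rw [← hv0]; unfold vR; cases v x <;> simp

lemma vR_mul (hmul : ∀ x y : L, v (x * y) = v x + v y) (x y : L) :
    vR v (x * y) = vR v x + vR v y := by
  unfold vR; rw [hmul]; cases v x <;> cases v y <;>
    simp [WithTop.map_top, WithTop.map_coe, ← WithTop.coe_add]

lemma vR_mono {x y : L} (hxy : v x ≤ v y) : vR v x ≤ vR v y := by
  unfold vR
  induction' hy : v y with m
  · simp
  · rw [hy] at hxy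
    lift v x to ℤ using (by intro htop; rw [htop] at hxy; exact absurd hxy (by simp)) with n
    simp only [WithTop.map_coe, WithTop.coe_le_coe] at *
    exact_mod_cast hxy

lemma v_one (hv0 : ∀ x : L, v x = ⊤ ↔ x = 0) (hmul : ∀ x y : L, v (x * y) = v x + v y) :
    v 1 = 0 := by
  have h := hmul 1 1
  rw [one_mul] at h
  have h1 : v 1 ≠ ⊤ := by rw [Ne, hv0]; exact one_ne_zero
  lift v 1 to ℤ using h1 with n
  rw [← WithTop.coe_add] at h
  have hn : n = n + n := by exact_mod_cast h
  have : n = 0 := by omega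
  simp [this]

lemma v_neg (hv0 : ∀ x : L, v x = ⊤ ↔ x = 0) (hmul : ∀ x y : L, v (x * y) = v x + v y)
    (x : L) : v (-x) = v x := by
  have hm1 : v (-1 : L) = 0 := by
    have h := hmul (-1 : L) (-1)
    rw [neg_mul_neg, one_mul, v_one hv0 hmul] at h
    have h1 : v (-1 : L) ≠ ⊤ := by rw [Ne, hv0]; exact neg_ne_zero.mpr one_ne_zero
    lift v (-1 : L) to ℤ using h1 with n
    rw [← WithTop.coe_add] at h
    have hn : (0 : ℤ) = n + n := by exact_mod_cast h
    have : n = 0 := by omega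
    simp [this]
  calc v (-x) = v ((-1) * x) := by rw [neg_one_mul]
  _ = v (-1 : L) + v x := hmul _ _
  _ = v x := by rw [hm1, zero_add]

lemma vR_neg (hv0 : ∀ x : L, v x = ⊤ ↔ x = 0) (hmul : ∀ x y : L, v (x * y) = v x + v y)
    (x : L) : vR v (-x) = vR v x := by
  unfold vR; rw [v_neg hv0 hmul]

lemma vR_add (hadd : ∀ x y : L, min (v x) (v y) ≤ v (x + y)) (x y : L) :
    min (vR v x) (vR v y) ≤ vR v (x + y) := by
  rcases le_total (v x) (v y) with hle | hle
  · exact le_trans (min_le_left _ _) (vR_mono ((min_eq_left hle ▸ hadd x y)))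
  · exact le_trans (min_le_right _ _) (vR_mono ((min_eq_right hle ▸ hadd x y)))

lemma vR_add_eq (hv0 : ∀ x : L, v x = ⊤ ↔ x = 0)
    (hadd : ∀ x y : L, min (v x) (v y) ≤ v (x + y))
    (hmul : ∀ x y : L, v (x * y) = v x + v y)
    {x y : L} (hxy : vR v x < vR v y) : vR v (x + y) = vR v x := by
  have h1 : vR v x ≤ vR v (x + y) := by
    have := vR_add hadd x y
    rwa [min_eq_left hxy.le] at this
  have h2 : vR v (x + y) ≤ vR v x := by
    have h := vR_add hadd (x + y) (-y)
    rw [add_neg_cancel_right, vR_neg hv0 hmul] at h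
    rcases min_cases (vR v (x + y)) (vR v y) with ⟨he, _⟩ | ⟨he, hle⟩
    · rw [he] at h; exact h
    · rw [he] at h; exact absurd (lt_of_lt_of_le hxy h) (lt_irrefl _)
  exact le_antisymm h2 h1

lemma vR_sum {ι : Type*} (hv0 : ∀ x : L, v x = ⊤ ↔ x = 0)
    (hadd : ∀ x y : L, min (v x) (v y) ≤ v (x + y))
    (s : Finset ι) (t : ι → L) :
    s.inf (fun i => vR v (t i)) ≤ vR v (∑ i ∈ s, t i) := by
  induction s using Finset.cons_induction with
  | empty => simp [vR_eq_top hv0]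
  | cons a s ha ih =>
    rw [Finset.sum_cons, Finset.inf_cons]
    exact le_trans (min_le_min (le_refl _) ih) (vR_add hadd _ _)

lemma vR_sum_eq {ι : Type*} [DecidableEq ι] (hv0 : ∀ x : L, v x = ⊤ ↔ x = 0)
    (hadd : ∀ x y : L, min (v x) (v y) ≤ v (x + y))
    (hmul : ∀ x y : L, v (x * y) = v x + v y)
    (s : Finset ι) (t : ι → L) (i0 : ι) (hi0 : i0 ∈ s) (ht0 : t i0 ≠ 0)
    (hstrict : ∀ i ∈ s, i ≠ i0 → vR v (t i0) < vR v (t i)) :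
    vR v (∑ i ∈ s, t i) = vR v (t i0) := by
  rw [← Finset.add_sum_erase s t hi0]
  rcases eq_or_ne ((s.erase i0).sum t) 0 with hz | hz
  · rw [hz, add_zero]
  have hlt : vR v (t i0) < vR v ((s.erase i0).sum t) := by
    refine lt_of_lt_of_le ?_ (vR_sum hv0 hadd _ _)
    rw [Finset.lt_inf_iff]
    · intro b hb
      exact hstrict b (Finset.mem_of_mem_erase hb) (Finset.ne_of_mem_erase hb)
    · exact lt_top_iff_ne_top.2 (fun htop => ht0 ((vR_eq_top hv0 _).1 htop))
  exact vR_add_eq hv0 hadd hmul hlt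

lemma vc_le_coeff (hv0 : ∀ x : L, v x = ⊤ ↔ x = 0) (c : ℝ) (f : Polynomial L) (i : ℕ) :
    vc v c f ≤ vR v (f.coeff i) + (((i : ℝ) * c : ℝ) : WithTop ℝ) := by
  by_cases hi : i ∈ f.support
  · exact Finset.inf_le hi
  · rw [Polynomial.notMem_support_iff] at hi
    rw [hi, (vR_eq_top hv0 0).2 rfl, top_add]
    exact le_top

lemma le_vc (c : ℝ) (f : Polynomial L) (a : WithTop ℝ)
    (H : ∀ i, a ≤ vR v (f.coeff i) + (((i : ℝ) * c : ℝ) : WithTop ℝ)) : a ≤ vc v c f :=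
  Finset.le_inf fun i _ => H i

end Aux


lemma harr (a b : WithTop ℝ) (j k : ℕ) (c : ℝ) :
    (a + (((j : ℝ) * c : ℝ) : WithTop ℝ)) + (b + (((k : ℝ) * c : ℝ) : WithTop ℝ))
      = (a + b) + (((((j + k : ℕ) : ℝ) * c : ℝ) : WithTop ℝ)) := by
  have hc : ((((j + k : ℕ) : ℝ)) * c) = (j : ℝ) * c + (k : ℝ) * c := by push_cast; ring
  rw [hc, WithTop.coe_add]
  abel


/-- Bounds on the quotient and remainder of right-division with remainder:
if `deg h ≥ deg f = d`, `v_c f = v f_d + d·c` (`f_d` the leading coefficient),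
and `h = q·f + r` with `r = 0` or `deg r < d`, then
`v_c q ≥ v_c h − v_c f` (stated as `v_c h ≤ v_c q + v_c f`) and `v_c r ≥ v_c h`. -/
theorem stmt7 {L : Type*} [DivisionRing L] (v : L → WithTop ℤ)
    (hv0 : ∀ x : L, v x = ⊤ ↔ x = 0)
    (hadd : ∀ x y : L, min (v x) (v y) ≤ v (x + y))
    (hmul : ∀ x y : L, v (x * y) = v x + v y)
    (c : ℝ) (h f q r : Polynomial L)
    (hdeg : f.degree ≤ h.degree)
    (hlead : vc v c f = vR v f.leadingCoeff + (((f.natDegree : ℝ) * c : ℝ) : WithTop ℝ))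
    (heq : h = q * f + r)
    (hr : r = 0 ∨ r.degree < f.degree) :
    vc v c h ≤ vc v c q + vc v c f ∧ vc v c h ≤ vc v c r := by
  by_cases hq0 : q = 0
  · subst hq0
    rw [zero_mul, zero_add] at heq
    subst heq
    refine ⟨?_, le_refl _⟩
    have hz : vc v c (0 : Polynomial L) = ⊤ := by simp [vc]
    rw [hz, top_add]
    exact le_top
  by_cases hf0 : f = 0
  · subst hf0
    rw [mul_zero, zero_add] at heq
    subst heq
    refine ⟨?_, le_refl _⟩
    have hz : vc v c (0 : Polynomial L) = ⊤ := by simp [vc]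
    rw [hz, add_top]
    exact le_top
  -- main case
  set d := f.natDegree with hd
  have hfd : f.coeff d ≠ 0 := by
    rw [hd]; exact Polynomial.leadingCoeff_ne_zero.mpr hf0
  rw [Polynomial.leadingCoeff] at hlead
  have hqsupp : q.support.Nonempty := Polynomial.support_nonempty.mpr hq0
  set g : ℕ → WithTop ℝ := fun j => vR v (q.coeff j) + (((j : ℝ) * c : ℝ) : WithTop ℝ) with hg
  have hattain : ∃ j ∈ q.support, vc v c q = g j := Finset.exists_mem_eq_inf _ hqsupp _
  classical
  set S := q.support.filter (fun j => g j = vc v c q) with hS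
  have hSne : S.Nonempty := by
    obtain ⟨j, hj, hje⟩ := hattain
    exact ⟨j, Finset.mem_filter.2 ⟨hj, hje.symm⟩⟩
  set i := S.max' hSne with hi
  have hiS : i ∈ S := S.max'_mem hSne
  have hisupp : i ∈ q.support := (Finset.mem_filter.1 hiS).1
  have hgi : g i = vc v c q := (Finset.mem_filter.1 hiS).2
  have hqi : q.coeff i ≠ 0 := Polynomial.mem_support_iff.1 hisupp
  have hstrictq : ∀ j, i < j → q.coeff j ≠ 0 → vc v c q < g j := by
    intro j hij hj
    have hjsupp : j ∈ q.support := Polynomial.mem_support_iff.2 hj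
    have hle : vc v c q ≤ g j := Finset.inf_le hjsupp
    rcases lt_or_eq_of_le hle with hlt | heqv
    · exact hlt
    · exact absurd (S.le_max' j (Finset.mem_filter.2 ⟨hjsupp, heqv.symm⟩)) (not_le.2 hij)
  have hvfd : vR v (f.coeff d) ≠ ⊤ := fun ht => hfd ((vR_eq_top hv0 _).1 ht)
  have hvcf_ne : vR v (f.coeff d) + (((d : ℝ) * c : ℝ) : WithTop ℝ) ≠ ⊤ :=
    WithTop.add_ne_top.2 ⟨hvfd, WithTop.coe_ne_top⟩
  -- the key coefficient computation
  have hcoeff : vR v ((q * f).coeff (i + d)) = vR v (q.coeff i * f.coeff d) := by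
    rw [Polynomial.coeff_mul]
    apply vR_sum_eq hv0 hadd hmul _ _ (i, d)
    · exact Finset.HasAntidiagonal.mem_antidiagonal.2 rfl
    · exact mul_ne_zero hqi hfd
    · rintro ⟨j, k⟩ hjk hne
      rw [Finset.HasAntidiagonal.mem_antidiagonal] at hjk
      have hlt_top : vR v (q.coeff i * f.coeff d) < ⊤ :=
        lt_top_iff_ne_top.2 (fun ht => mul_ne_zero hqi hfd ((vR_eq_top hv0 _).1 ht))
      rcases lt_trichotomy j i with hji | hji | hji
      · -- k > d, so f.coeff k = 0
        have hk : d < k := by omega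
        rw [Polynomial.coeff_eq_zero_of_natDegree_lt hk, mul_zero]
        rw [(vR_eq_top hv0 (0 : L)).2 rfl]
        exact hlt_top
      · exact absurd (by simp [← hji]; omega : (j, k) = (i, d)) hne
      · by_cases hqj : q.coeff j = 0
        · rw [hqj, zero_mul, (vR_eq_top hv0 (0 : L)).2 rfl]
          exact hlt_top
        · have h1 : vc v c q < g j := hstrictq j hji hqj
          have h2 : vc v c f ≤ vR v (f.coeff k) + (((k : ℝ) * c : ℝ) : WithTop ℝ) :=
            vc_le_coeff hv0 c f k
          have key : vR v (q.coeff i * f.coeff d) + ((((i + d : ℕ) : ℝ) * c : ℝ) : WithTop ℝ)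
              < vR v (q.coeff j * f.coeff k) + ((((i + d : ℕ) : ℝ) * c : ℝ) : WithTop ℝ) := by
            rw [vR_mul hmul, vR_mul hmul, ← harr, ← hjk, ← harr]
            show g i + _ < g j + _
            rw [hgi]
            exact WithTop.add_lt_add_of_lt_of_le hvcf_ne h1 (hlead ▸ h2)
          exact (WithTop.add_lt_add_iff_right WithTop.coe_ne_top).1 key
  have hrc : r.coeff (i + d) = 0 := by
    rcases hr with rfl | hdr
    · simp
    · apply Polynomial.coeff_eq_zero_of_degree_lt
      calc r.degree < f.degree := hdr
      _ ≤ (d : WithBot ℕ) := Polynomial.degree_le_natDegree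
      _ ≤ ((i + d : ℕ) : WithBot ℕ) := by exact_mod_cast Nat.le_add_left d i
  have step1 : vc v c h ≤ vc v c q + vc v c f := by
    have hle := vc_le_coeff hv0 c h (i + d)
    have hch : h.coeff (i + d) = (q * f).coeff (i + d) := by
      rw [heq, Polynomial.coeff_add, hrc, add_zero]
    rw [hch, hcoeff, vR_mul hmul, ← harr] at hle
    show vc v c h ≤ vc v c q + vc v c f
    rw [← hgi, hlead]
    exact hle
  refine ⟨step1, ?_⟩
  -- second part : vc h ≤ vc r
  apply le_vc
  intro n
  have h1 : vc v c h ≤ vR v (h.coeff n) + (((n : ℝ) * c : ℝ) : WithTop ℝ) :=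
    vc_le_coeff hv0 c h n
  have h2 : vc v c h ≤ vR v ((q * f).coeff n) + (((n : ℝ) * c : ℝ) : WithTop ℝ) := by
    refine le_trans step1 ?_
    rw [Polynomial.coeff_mul]
    obtain ⟨p, hp, he⟩ := Finset.exists_mem_eq_inf (Finset.HasAntidiagonal.antidiagonal n)
      ⟨(0, n), by simp⟩ (fun p => vR v (q.coeff p.1 * f.coeff p.2))
    have hs := vR_sum hv0 hadd (Finset.HasAntidiagonal.antidiagonal n) (fun p => q.coeff p.1 * f.coeff p.2)
    rw [he] at hs
    rw [Finset.HasAntidiagonal.mem_antidiagonal] at hp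
    calc vc v c q + vc v c f
        ≤ (vR v (q.coeff p.1) + (((p.1 : ℝ) * c : ℝ) : WithTop ℝ))
          + (vR v (f.coeff p.2) + (((p.2 : ℝ) * c : ℝ) : WithTop ℝ)) :=
          add_le_add (vc_le_coeff hv0 c q p.1) (vc_le_coeff hv0 c f p.2)
      _ = vR v (q.coeff p.1 * f.coeff p.2) + ((((p.1 + p.2 : ℕ) : ℝ) * c : ℝ) : WithTop ℝ) := by
          rw [harr, vR_mul hmul]
      _ = vR v (q.coeff p.1 * f.coeff p.2) + (((n : ℝ) * c : ℝ) : WithTop ℝ) := by rw [hp]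
      _ ≤ vR v ((Finset.HasAntidiagonal.antidiagonal n).sum fun p => q.coeff p.1 * f.coeff p.2)
            + (((n : ℝ) * c : ℝ) : WithTop ℝ) := add_le_add_left hs _
  have hrn : r.coeff n = h.coeff n + (-((q * f).coeff n)) := by
    rw [heq, Polynomial.coeff_add]; abel
  have hmin : min (vR v (h.coeff n)) (vR v ((q * f).coeff n)) ≤ vR v (r.coeff n) := by
    rw [hrn]
    calc min (vR v (h.coeff n)) (vR v ((q * f).coeff n))
        = min (vR v (h.coeff n)) (vR v (-((q * f).coeff n))) := by rw [vR_neg hv0 hmul]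
      _ ≤ _ := vR_add hadd _ _
  rcases min_cases (vR v (h.coeff n)) (vR v ((q * f).coeff n)) with ⟨he, _⟩ | ⟨he, _⟩ <;>
    rw [he] at hmin
  · exact le_trans h1 (add_le_add_left hmin _)
  · exact le_trans h2 (add_le_add_left hmin _)
end

section
/- Let (L, v) be a complete discretely valued skew field with uniformizer σ, and let f ∈ L[t] be a monic polynomial of degree d whose Newton polygon consists of exactly one edge of slope s, with r := d·s ∈ ℕ. Let M = L[t]/fL[t] be the cyclic left L[t]-module. Then there exists an O-lattice Λ in M with σʳ tᵈ Λ = Λ; and if s > 0, Λ can be chosen with the additional property t⁻¹Λ ⊆ Λ. -/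
open Polynomial

/-- The valuation of a coefficient, as an extended real number. -/
noncomputable def evv {L : Type*} (v : L → WithTop ℤ) (x : L) : EReal :=
  WithTop.recTopCoe ⊤ (fun n : ℤ => ((n : ℝ) : EReal)) (v x)

/-- The Newton polygon (lower convex hull function) of a polynomial. -/
noncomputable def NP {L : Type*} [DivisionRing L] (v : L → WithTop ℤ)
    (f : Polynomial L) (x : ℝ) : EReal :=
  sSup {y : EReal | ∃ a b : ℝ,
    (∀ i ∈ f.support, ((a * i + b : ℝ) : EReal) ≤ evv v (f.coeff i)) ∧
    y = ((a * x + b : ℝ) : EReal)}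

theorem evv_coe {L : Type*} (v : L → WithTop ℤ) (x : L) (n : ℤ)
    (h : v x = (n : WithTop ℤ)) : evv v x = ((n:ℝ) : EReal) := by
  unfold evv; rw [h]; rfl
theorem evv_top {L : Type*} (v : L → WithTop ℤ) (x : L)
    (h : v x = ⊤) : evv v x = ⊤ := by
  unfold evv; rw [h]; rfl

theorem auxBasis {L M : Type*} [DivisionRing L] [AddCommGroup M] [Module (Polynomial L) M]
    [Module L M]
    (hcompat : ∀ (a : L) (m : M), a • m = (C a : Polynomial L) • m)
    (f : Polynomial L) (hmonic : f.Monic) (d : ℕ) (hd : f.natDegree = d) (hd0 : 0 < d)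
    (hiso : Nonempty (M ≃ₗ[Polynomial L] (Polynomial L ⧸ Submodule.span (Polynomial L) {f}))) :
    ∃ e : Module.Basis (Fin d) L M,
      (∀ i j : Fin d, (i:ℕ)+1 = (j:ℕ) → (X : Polynomial L) • e i = e j) ∧
      ((X : Polynomial L) • e ⟨d-1, Nat.sub_lt hd0 one_pos⟩
        = -∑ j : Fin d, f.coeff (j:ℕ) • e j) := by
  classical
  obtain ⟨φ⟩ := hiso
  set S : Submodule (Polynomial L) (Polynomial L) := Submodule.span (Polynomial L) {f} with hS
  let mk : Polynomial L → (Polynomial L ⧸ S) := fun p => Submodule.Quotient.mk p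
  let E : ℕ → M := fun i => φ.symm (mk (X ^ i))
  have hf0 : f ≠ 0 := hmonic.ne_zero
  have hfS : f ∈ S := Submodule.mem_span_singleton_self f
  -- step identity
  have hstep : ∀ i : ℕ, (X : Polynomial L) • E i = E (i + 1) := by
    intro i
    have : (X : Polynomial L) • mk (X ^ i) = mk (X ^ (i+1)) := by
      show (X : Polynomial L) • Submodule.Quotient.mk (X ^ i) =
        Submodule.Quotient.mk (X ^ (i+1))
      rw [← Submodule.Quotient.mk_smul, smul_eq_mul, ← pow_succ']
    calc (X : Polynomial L) • E i = φ.symm ((X : Polynomial L) • mk (X ^ i)) := by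
          rw [map_smul]
      _ = E (i+1) := by rw [this]
  -- mk kills multiples of f
  have hmk_sub : ∀ p q : Polynomial L, p - q ∈ S → φ.symm (mk p) = φ.symm (mk q) := by
    intro p q h
    have : mk p = mk q := (Submodule.Quotient.eq S).2 h
    rw [show mk p = Submodule.Quotient.mk p from rfl] at *
    exact congrArg _ this
  -- span
  have key : ∀ (n : ℕ) (p : Polynomial L), p.natDegree < n →
      φ.symm (mk p) ∈ Submodule.span L (Set.range fun j : Fin d => E (j:ℕ)) := by
    intro n
    induction n with
    | zero => intro p hp; exact absurd hp (Nat.not_lt_zero _)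
    | succ n ih =>
      intro p hp
      by_cases hc : p.natDegree < d
      · have hrep : p = ∑ i ∈ Finset.range d, (monomial i) (p.coeff i) := as_sum_range' p d hc
        rw [hrep]
        have : φ.symm (mk (∑ i ∈ Finset.range d, (monomial i) (p.coeff i)))
            = ∑ i ∈ Finset.range d, φ.symm (mk ((monomial i) (p.coeff i))) := by
          show φ.symm (S.mkQ _) = _
          rw [map_sum, map_sum]
          rfl
        rw [this]
        apply Submodule.sum_mem
        intro i hi
        have hi' : i < d := Finset.mem_range.mp hi
        have hmono : (monomial i) (p.coeff i) = (C (p.coeff i) : Polynomial L) • (X ^ i) := by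
          rw [smul_eq_mul, C_mul_X_pow_eq_monomial]
        have : φ.symm (mk ((monomial i) (p.coeff i))) = p.coeff i • E i := by
          rw [hmono, hcompat]
          show φ.symm (S.mkQ _) = _
          rw [map_smul, map_smul]
          rfl
        rw [this]
        exact Submodule.smul_mem _ _ (Submodule.subset_span ⟨⟨i, hi'⟩, rfl⟩)
      · have hdle : d ≤ p.natDegree := le_of_not_gt hc
        have hp0 : p ≠ 0 := by
          intro h0
          rw [h0, natDegree_zero] at hdle
          omega
        set k := p.natDegree - d with hk
        set z : Polynomial L := C p.leadingCoeff * X ^ k * f with hz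
        have hlc0 : p.leadingCoeff ≠ 0 := leadingCoeff_ne_zero.mpr hp0
        have hz1 : (C p.leadingCoeff * X ^ k : Polynomial L) ≠ 0 :=
          mul_ne_zero (fun h0 => hlc0 (by simpa using congrArg (fun q => Polynomial.coeff q 0) h0))
            (pow_ne_zero _ X_ne_zero)
        have hz0 : z ≠ 0 := mul_ne_zero hz1 hf0
        have hzdeg : z.natDegree = p.natDegree := by
          rw [hz, natDegree_mul hz1 hf0, natDegree_C_mul_X_pow k _ hlc0, hd]
          omega
        have hzlc : z.leadingCoeff = p.leadingCoeff := by
          rw [hz, leadingCoeff_mul, leadingCoeff_mul, leadingCoeff_C, leadingCoeff_X_pow,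
            hmonic.leadingCoeff, mul_one, mul_one]
        have hdeg : p.degree = z.degree := by
          rw [degree_eq_natDegree hp0, degree_eq_natDegree hz0, hzdeg]
        have hlt : (p - z).natDegree < p.natDegree := by
          rcases eq_or_ne (p - z) 0 with h0 | h0
          · rw [h0, natDegree_zero]; omega
          · exact natDegree_lt_natDegree h0 (degree_sub_lt hdeg hp0 hzlc.symm)
        have hzS : z ∈ S := by
          have : z = (C p.leadingCoeff * X ^ k) • f := by rw [smul_eq_mul, hz]
          rw [this]
          exact S.smul_mem _ hfS
        have : φ.symm (mk p) = φ.symm (mk (p - z)) := by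
          apply hmk_sub
          have : p - (p - z) = z := sub_sub_cancel p z
          rw [this]
          exact hzS
        rw [this]
        exact ih _ (by omega)
  have hspan : ⊤ ≤ Submodule.span L (Set.range fun j : Fin d => E (j:ℕ)) := by
    intro m _
    obtain ⟨p, hp⟩ := Submodule.Quotient.mk_surjective S (φ m)
    have : m = φ.symm (mk p) := by
      rw [show mk p = Submodule.Quotient.mk p from rfl, hp, LinearEquiv.symm_apply_apply]
    rw [this]
    exact key (p.natDegree + 1) p (Nat.lt_succ_self _)
  have hli : LinearIndependent L (fun j : Fin d => E (j:ℕ)) := by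
    rw [Fintype.linearIndependent_iff]
    intro g hg
    set P : Polynomial L := ∑ i : Fin d, C (g i) * X ^ (i:ℕ) with hP
    have hPmk : φ.symm (mk P) = 0 := by
      have : φ.symm (mk P) = ∑ i : Fin d, g i • E (i:ℕ) := by
        show φ.symm (S.mkQ _) = _
        rw [map_sum, map_sum]
        apply Finset.sum_congr rfl
        intro i _
        rw [show (C (g i) * X ^ (i:ℕ) : Polynomial L) = (C (g i) : Polynomial L) • (X ^ (i:ℕ))
          by rw [smul_eq_mul]]
        rw [map_smul, map_smul, ← hcompat]
        rfl
      rw [this, hg]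
    have hPS : P ∈ S := by
      have : mk P = 0 := by
        have := congrArg φ hPmk
        rw [LinearEquiv.apply_symm_apply, map_zero] at this
        exact this
      exact (Submodule.Quotient.mk_eq_zero S).mp this
    obtain ⟨q, hq⟩ := Submodule.mem_span_singleton.mp hPS
    have hPdeg : P.natDegree < d := by
      have : P.natDegree ≤ d - 1 := by
        apply natDegree_sum_le_of_forall_le
        intro i _
        calc (C (g i) * X ^ (i:ℕ)).natDegree ≤ (C (g i)).natDegree + (X ^ (i:ℕ) : Polynomial L).natDegree :=
              natDegree_mul_le
          _ ≤ 0 + (i:ℕ) := by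
              rw [natDegree_C, natDegree_X_pow]
          _ ≤ d - 1 := by omega
      omega
    have hq0 : q = 0 := by
      by_contra hq0
      have : P.natDegree = q.natDegree + d := by
        rw [← hq, smul_eq_mul, natDegree_mul hq0 hf0, hd]
      omega
    have hP0 : P = 0 := by rw [← hq, hq0, zero_smul]
    intro i
    have := congrArg (fun p => Polynomial.coeff p (i:ℕ)) hP0
    simp only [hP, finset_sum_coeff, coeff_C_mul, coeff_X_pow, coeff_zero] at this
    rw [Finset.sum_eq_single i] at this
    · simpa using this
    · intro b _ hbi
      have : ¬((i:ℕ) = (b:ℕ)) := fun h => hbi (Fin.ext h.symm)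
      simp [this]
    · intro h; exact absurd (Finset.mem_univ i) h
  let e : Module.Basis (Fin d) L M := Module.Basis.mk hli hspan
  have he : ∀ j : Fin d, e j = E (j:ℕ) := fun j => Module.Basis.mk_apply hli hspan j
  refine ⟨e, ?_, ?_⟩
  · intro i j hij
    rw [he, he, ← hij, hstep]
  · rw [he]
    have h1 : (X : Polynomial L) • E (((⟨d-1, Nat.sub_lt hd0 one_pos⟩ : Fin d)):ℕ) = E d := by
      rw [hstep]
      congr 1
      show d - 1 + 1 = d
      omega
    rw [h1]
    -- E d = -∑ j, coeff j • E j
    have hcd : f.coeff d = 1 := by rw [← hd]; exact hmonic.coeff_natDegree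
    have hfrep : f = (∑ i ∈ Finset.range d, (monomial i) (f.coeff i)) + X ^ d := by
      conv_lhs => rw [as_sum_range' f (d+1) (by omega)]
      rw [Finset.sum_range_succ, hcd, ← X_pow_eq_monomial]
    have h2 : E d = φ.symm (mk (X ^ d - f)) := by
      apply hmk_sub
      have : (X:Polynomial L) ^ d - (X ^ d - f) = f := sub_sub_cancel _ _
      rw [this]; exact hfS
    have h3 : (X:Polynomial L) ^ d - f = -(∑ i ∈ Finset.range d, (monomial i) (f.coeff i)) := by
      conv_lhs => rw [hfrep]
      abel
    have h4 : φ.symm (mk (-(∑ i ∈ Finset.range d, (monomial i) (f.coeff i))))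
        = -(∑ i ∈ Finset.range d, f.coeff i • E i) := by
      show φ.symm (S.mkQ _) = _
      rw [map_neg, map_neg, map_sum, map_sum]
      congr 1
      apply Finset.sum_congr rfl
      intro i _
      rw [show ((monomial i) (f.coeff i) : Polynomial L) = (C (f.coeff i) : Polynomial L) • (X ^ i)
        by rw [smul_eq_mul, C_mul_X_pow_eq_monomial]]
      rw [map_smul, map_smul, ← hcompat]
      rfl
    rw [h2, h3, h4, ← Fin.sum_univ_eq_sum_range (fun i => f.coeff i • E i) d]
    congr 1
    apply Finset.sum_congr rfl
    intro j _
    rw [he]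

set_option maxHeartbeats 2000000 in
/-- Existence of stable lattices: let `f ∈ L[t]` be monic of degree `d > 0` whose Newton
polygon is a single edge of slope `s` (so `N_f x = s·(x − d)` on `[0, d]`), with
`r = d·s ∈ ℕ`, and let `M` be the cyclic left `L[t]`-module `L[t]/L[t]f`.  Then there is
an `O`-lattice `Λ` in `M` with `σʳ tᵈ Λ = Λ`; and if `s > 0` the lattice can moreover be
chosen with `t⁻¹Λ ⊆ Λ` (i.e. `Λ ⊆ tΛ`). -/
theorem stmt14 {L M : Type*} [DivisionRing L]
    [AddCommGroup M] [Module (Polynomial L) M] [Module L M]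
    (hcompat : ∀ (a : L) (m : M), a • m = (Polynomial.C a : Polynomial L) • m)
    (v : L → WithTop ℤ)
    (hv0 : ∀ x : L, v x = ⊤ ↔ x = 0)
    (hadd : ∀ x y : L, min (v x) (v y) ≤ v (x + y))
    (hmul : ∀ x y : L, v (x * y) = v x + v y)
    (hcomplete : ∀ x : ℕ → L,
      (∀ M' : ℤ, ∃ N : ℕ, ∀ n ≥ N, (M' : WithTop ℤ) ≤ v (x n)) →
      ∃ t : L, ∀ M' : ℤ, ∃ N : ℕ, ∀ n ≥ N,
        (M' : WithTop ℤ) ≤ v (t - ∑ i ∈ Finset.range n, x i))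
    (O : Subring L) (hO : (O : Set L) = {x : L | 0 ≤ v x})
    (σ : L) (hσ : v σ = 1)
    (f : Polynomial L) (hmonic : f.Monic) (d : ℕ) (hd : f.natDegree = d) (hd0 : 0 < d)
    (s : ℝ) (r : ℕ) (hr : (r : ℝ) = (d : ℝ) * s)
    (hedge : ∀ x ∈ Set.Icc (0 : ℝ) (d : ℝ), NP v f x = ((s * (x - (d : ℝ)) : ℝ) : EReal))
    (hiso : Nonempty (M ≃ₗ[Polynomial L]
      (Polynomial L ⧸ Submodule.span (Polynomial L) {f}))) :
    (∃ Λ : Submodule ↥O M, Λ.FG ∧ (∃ (n : ℕ) (b : Module.Basis (Fin n) L M), ∀ i, b i ∈ Λ) ∧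
      (fun m : M => (Polynomial.C (σ ^ r) * Polynomial.X ^ d : Polynomial L) • m) ''
        (Λ : Set M) = (Λ : Set M)) ∧
    (0 < s → ∃ Λ : Submodule ↥O M, Λ.FG ∧
      (∃ (n : ℕ) (b : Module.Basis (Fin n) L M), ∀ i, b i ∈ Λ) ∧
      (fun m : M => (Polynomial.C (σ ^ r) * Polynomial.X ^ d : Polynomial L) • m) ''
        (Λ : Set M) = (Λ : Set M) ∧
      (Λ : Set M) ⊆ (fun m : M => (Polynomial.X : Polynomial L) • m) '' (Λ : Set M)) := by
  classical
  -- ## basic valuation facts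
  have hσ0 : σ ≠ 0 := by
    intro h
    rw [h, (hv0 0).2 rfl] at hσ
    exact (by simp : (⊤ : WithTop ℤ) ≠ 1) hσ
  have hfin : ∀ x : L, x ≠ 0 → ∃ n : ℤ, v x = (n : WithTop ℤ) := by
    intro x hx
    rcases WithTop.ne_top_iff_exists.mp (fun h => hx ((hv0 x).1 h)) with ⟨n, hn⟩
    exact ⟨n, hn.symm⟩
  have hv1 : v 1 = ((0:ℤ) : WithTop ℤ) := by
    obtain ⟨z, hz⟩ := hfin 1 one_ne_zero
    have h2 := hmul 1 1
    rw [one_mul, hz, ← WithTop.coe_add] at h2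
    have : z = z + z := WithTop.coe_inj.mp h2
    have : z = 0 := by omega
    rw [hz, this]
  have hvinv : ∀ (x : L) (n : ℤ), x ≠ 0 → v x = (n : WithTop ℤ) →
      v x⁻¹ = ((-n : ℤ) : WithTop ℤ) := by
    intro x n hx hn
    obtain ⟨w, hw⟩ := hfin x⁻¹ (inv_ne_zero hx)
    have h2 := hmul x⁻¹ x
    rw [inv_mul_cancel₀ hx, hv1, hw, hn, ← WithTop.coe_add] at h2
    have : (0:ℤ) = w + n := WithTop.coe_inj.mp h2
    have : w = -n := by omega
    rw [hw, this]
  have hvσpow : ∀ k : ℕ, v (σ^k) = ((k:ℤ) : WithTop ℤ) := by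
    intro k
    induction k with
    | zero => simpa using hv1
    | succ k ih =>
      rw [pow_succ, hmul, ih, hσ, show (1 : WithTop ℤ) = ((1:ℤ) : WithTop ℤ) by rfl,
        ← WithTop.coe_add]
      norm_num
  have hvneg : ∀ x : L, v (-x) = v x := by
    have hm1 : v (-1 : L) = ((0:ℤ) : WithTop ℤ) := by
      obtain ⟨z, hz⟩ := hfin (-1 : L) (by norm_num)
      have h2 := hmul (-1) (-1)
      rw [neg_mul_neg, one_mul, hv1, hz, ← WithTop.coe_add] at h2
      have : (0:ℤ) = z + z := WithTop.coe_inj.mp h2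
      have : z = 0 := by omega
      rw [hz, this]
    intro x
    rw [show -x = -1 * x from (neg_one_mul x).symm, hmul, hm1]
    exact zero_add _
  -- ## the predicate toolbox : P β x means β ≤ v x
  let P : ℝ → L → Prop := fun β x => ((β : ℝ) : EReal) ≤ evv v x
  have hPdef : ∀ β x, P β x ↔ ((β : ℝ) : EReal) ≤ evv v x := fun _ _ => Iff.rfl
  have hP0 : ∀ β, P β 0 := by
    intro β
    rw [hPdef, evv_top v 0 ((hv0 0).2 rfl)]
    exact le_top
  have hPfin : ∀ β x, x ≠ 0 → (P β x ↔ ∃ n : ℤ, v x = (n : WithTop ℤ) ∧ β ≤ (n:ℝ)) := by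
    intro β x hx
    obtain ⟨n, hn⟩ := hfin x hx
    rw [hPdef, evv_coe v x n hn]
    constructor
    · intro h
      exact ⟨n, hn, EReal.coe_le_coe_iff.mp h⟩
    · rintro ⟨n', hn', h⟩
      rw [hn] at hn'
      have hnn : n = n' := WithTop.coe_inj.mp hn'
      exact EReal.coe_le_coe_iff.mpr (by rw [hnn]; exact_mod_cast h)
  have hPmono : ∀ (β β' : ℝ) x, β' ≤ β → P β x → P β' x := by
    intro β β' x h hβ
    exact le_trans (EReal.coe_le_coe_iff.mpr h) hβ
  have hPmul : ∀ (β γ : ℝ) (x y : L), P β x → P γ y → P (β + γ) (x * y) := by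
    intro β γ x y hx hy
    rcases eq_or_ne x 0 with rfl | hx0
    · rw [zero_mul]; exact hP0 _
    rcases eq_or_ne y 0 with rfl | hy0
    · rw [mul_zero]; exact hP0 _
    obtain ⟨n, hn, hβn⟩ := (hPfin β x hx0).mp hx
    obtain ⟨m', hm', hγm⟩ := (hPfin γ y hy0).mp hy
    rw [hPfin _ _ (mul_ne_zero hx0 hy0)]
    refine ⟨n + m', ?_, ?_⟩
    · rw [hmul, hn, hm', ← WithTop.coe_add]
    · push_cast
      exact add_le_add hβn hγm
  have hPadd : ∀ (β : ℝ) (x y : L), P β x → P β y → P β (x + y) := by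
    intro β x y hx hy
    rcases eq_or_ne (x + y) 0 with h0 | h0
    · rw [h0]; exact hP0 _
    obtain ⟨n, hn⟩ := hfin (x+y) h0
    rw [hPfin _ _ h0]
    refine ⟨n, hn, ?_⟩
    have hminle := hadd x y
    rw [hn] at hminle
    rcases le_total (v x) (v y) with hxy | hxy
    · rw [min_eq_left hxy] at hminle
      have hx0 : x ≠ 0 := by
        intro h
        rw [h, (hv0 0).2 rfl] at hminle
        exact absurd hminle (by simp)
      obtain ⟨nx, hnx, hβ⟩ := (hPfin β x hx0).mp hx
      rw [hnx] at hminle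
      have : nx ≤ n := WithTop.coe_le_coe.mp hminle
      exact le_trans hβ (by exact_mod_cast this)
    · rw [min_eq_right hxy] at hminle
      have hy0 : y ≠ 0 := by
        intro h
        rw [h, (hv0 0).2 rfl] at hminle
        exact absurd hminle (by simp)
      obtain ⟨ny, hny, hβ⟩ := (hPfin β y hy0).mp hy
      rw [hny] at hminle
      have : ny ≤ n := WithTop.coe_le_coe.mp hminle
      exact le_trans hβ (by exact_mod_cast this)
  have hPneg : ∀ (β : ℝ) (x : L), P β x → P β (-x) := by
    intro β x hx
    rcases eq_or_ne x 0 with rfl | hx0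
    · rw [neg_zero]; exact hP0 _
    obtain ⟨n, hn, hβ⟩ := (hPfin β x hx0).mp hx
    rw [hPfin _ _ (neg_ne_zero.mpr hx0)]
    exact ⟨n, by rw [hvneg, hn], hβ⟩
  have hPsub : ∀ (β : ℝ) (x y : L), P β x → P β y → P β (x - y) := by
    intro β x y hx hy
    rw [sub_eq_add_neg]
    exact hPadd _ _ _ hx (hPneg _ _ hy)
  have hPsum : ∀ (β : ℝ) {ι : Type} (t : Finset ι) (g : ι → L),
      (∀ i ∈ t, P β (g i)) → P β (∑ i ∈ t, g i) := by
    intro β ι t g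
    induction t using Finset.induction with
    | empty => intro _; rw [Finset.sum_empty]; exact hP0 _
    | insert _ _ hni ih =>
      intro h
      rw [Finset.sum_insert hni]
      exact hPadd _ _ _ (h _ (Finset.mem_insert_self _ _))
        (ih fun i hi => h i (Finset.mem_insert_of_mem hi))
  have hPσ : ∀ k : ℕ, P (k:ℝ) (σ^k) := by
    intro k
    rw [hPfin _ _ (pow_ne_zero _ hσ0)]
    exact ⟨k, hvσpow k, by norm_num⟩
  have hPσinv : ∀ k : ℕ, P (-(k:ℝ)) ((σ^k)⁻¹) := by
    intro k
    rw [hPfin _ _ (inv_ne_zero (pow_ne_zero _ hσ0))]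
    exact ⟨-(k:ℤ), hvinv _ _ (pow_ne_zero _ hσ0) (hvσpow k), by norm_num⟩
  have hPO : ∀ x : L, x ∈ O ↔ P 0 x := by
    intro x
    have hOx : x ∈ O ↔ (0 : WithTop ℤ) ≤ v x := by
      constructor
      · intro h; exact Set.ext_iff.mp hO x |>.1 h
      · intro h; exact Set.ext_iff.mp hO x |>.2 h
    rcases eq_or_ne x 0 with rfl | hx0
    · simp only [hOx, (hv0 0).2 rfl]
      constructor
      · intro _; exact hP0 0
      · intro _; exact le_top
    · obtain ⟨n, hn⟩ := hfin x hx0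
      rw [hOx, hn, hPfin _ _ hx0]
      constructor
      · intro h
        refine ⟨n, hn, ?_⟩
        have h2 : (0:ℤ) ≤ n := by exact_mod_cast h
        exact_mod_cast h2
      · rintro ⟨n', hn', h⟩
        rw [hn] at hn'
        have hnn : n = n' := WithTop.coe_inj.mp hn'
        subst hnn
        have h2 : (0:ℤ) ≤ n := by exact_mod_cast h
        exact_mod_cast h2
  -- s is nonnegative
  have hs0 : 0 ≤ s := by
    nlinarith [Nat.cast_nonneg (α := ℝ) r, (Nat.cast_pos (α := ℝ)).mpr hd0]
  -- ## Newton polygon coefficient bounds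
  have hNP_le : ∀ j ∈ f.support, NP v f (j:ℝ) ≤ evv v (f.coeff j) := by
    intro j hj
    apply sSup_le
    rintro y ⟨A, B, hAB, rfl⟩
    exact hAB j hj
  have hsupp_le : ∀ j ∈ f.support, (j:ℝ) ≤ (d:ℝ) := by
    intro j hj
    exact_mod_cast Nat.cast_le.mpr (hd ▸ le_natDegree_of_mem_supp j hj)
  have hbd' : ∀ j ∈ f.support, P (s * ((j:ℝ) - (d:ℝ))) (f.coeff j) := by
    intro j hj
    rw [hPdef]
    have hIcc : (j:ℝ) ∈ Set.Icc (0:ℝ) (d:ℝ) := ⟨Nat.cast_nonneg j, hsupp_le j hj⟩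
    have hh := hedge (j:ℝ) hIcc
    rw [← hh]
    exact hNP_le j hj
  have hbd : ∀ j : Fin d, P (s * (((j:ℕ):ℝ) - (d:ℝ))) (f.coeff (j:ℕ)) := by
    intro j
    by_cases hj : (j:ℕ) ∈ f.support
    · exact hbd' _ hj
    · rw [notMem_support_iff.mp hj]; exact hP0 _
  have h0supp : (0:ℕ) ∈ f.support := by
    by_contra h0
    have hne : f.support.Nonempty := nonempty_support_iff.mpr hmonic.ne_zero
    set V : ℤ := f.support.inf' hne (fun j => WithTop.untopD 0 (v (f.coeff j))) with hVdef
    have hVle : ∀ j ∈ f.support, ((V:ℝ):EReal) ≤ evv v (f.coeff j) := by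
      intro j hj
      have hj0 : f.coeff j ≠ 0 := mem_support_iff.mp hj
      obtain ⟨n, hn⟩ := hfin _ hj0
      rw [evv_coe v _ n hn, EReal.coe_le_coe_iff]
      have huntop : WithTop.untopD 0 (v (f.coeff j)) = n := by rw [hn]; rfl
      have hVn : V ≤ n := by
        rw [hVdef]
        exact huntop ▸ Finset.inf'_le _ hj
      exact_mod_cast hVn
    have hKle : ∀ K : ℝ, ((K:ℝ):EReal) ≤ NP v f 0 := by
      intro K
      apply le_sSup
      refine ⟨-(max 0 (K - V)), K, ?_, by norm_num⟩
      intro i hi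
      have hi1 : 1 ≤ (i:ℝ) := by
        have hine : i ≠ 0 := fun h => h0 (h ▸ hi)
        exact_mod_cast Nat.one_le_iff_ne_zero.mpr hine
      refine le_trans ?_ (hVle i hi)
      rw [EReal.coe_le_coe_iff]
      have h1 : K - V ≤ max 0 (K - V) := le_max_right _ _
      have h2 : (0:ℝ) ≤ max 0 (K - V) := le_max_left _ _
      nlinarith
    have hNP0 := hedge 0 ⟨le_refl 0, Nat.cast_nonneg d⟩
    have hcontr := hKle (s * ((0:ℝ) - d) + 1)
    rw [hNP0, EReal.coe_le_coe_iff] at hcontr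
    linarith
  have ha0ne : f.coeff 0 ≠ 0 := mem_support_iff.mp h0supp
  obtain ⟨n0, hn0⟩ := hfin _ ha0ne
  have hn0r : n0 = -(r:ℤ) := by
    have hlow := hbd' 0 h0supp
    rw [hPfin _ _ ha0ne] at hlow
    obtain ⟨n, hn, hle⟩ := hlow
    rw [hn0] at hn
    have hnn : n0 = n := WithTop.coe_inj.mp hn
    subst hnn
    have hlow' : -(r:ℝ) ≤ (n0:ℝ) := by
      have : s * (((0:ℕ):ℝ) - (d:ℝ)) = -(r:ℝ) := by push_cast; linarith [hr]
      linarith [hle, this.symm.le, this.le]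
    have hup : (n0:ℝ) ≤ -(r:ℝ) := by
      by_contra hup
      push_neg at hup
      have hn0ge : -(r:ℝ) + 1 ≤ (n0:ℝ) := by
        have h1 : -(r:ℤ) < n0 := by exact_mod_cast hup
        have h2 : -(r:ℤ) + 1 ≤ n0 := h1
        exact_mod_cast h2
      have hfeas : ((-(r:ℝ)+1 : ℝ):EReal) ≤ NP v f 0 := by
        apply le_sSup
        refine ⟨s - 1, -(r:ℝ)+1, ?_, by norm_num⟩
        intro i hi
        rcases Nat.eq_zero_or_pos i with hi0 | hipos
        · subst hi0
          rw [evv_coe v _ n0 hn0, EReal.coe_le_coe_iff]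
          push_cast
          linarith
        · refine le_trans ?_ (hbd' i hi)
          rw [EReal.coe_le_coe_iff]
          have h1 : (1:ℝ) ≤ (i:ℝ) := by exact_mod_cast hipos
          nlinarith [hr]
      have hNP0 := hedge 0 ⟨le_refl 0, Nat.cast_nonneg d⟩
      rw [hNP0, EReal.coe_le_coe_iff] at hfeas
      nlinarith [hr]
    have h1 : (n0:ℝ) = -(r:ℝ) := le_antisymm hup hlow'
    exact_mod_cast h1
  have ha0inv : P (r:ℝ) ((f.coeff 0)⁻¹) := by
    rw [hPfin _ _ (inv_ne_zero ha0ne)]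
    have hh := hvinv _ n0 ha0ne hn0
    rw [hn0r] at hh
    exact ⟨(r:ℤ), by simpa using hh, by norm_num⟩
  -- ## basis and shift operator
  obtain ⟨e, hTe1, hTe2⟩ := auxBasis hcompat f hmonic d hd hd0 hiso
  have hTsmul : ∀ (c : L) (m : M), (X : Polynomial L) • (c • m)
      = c • ((X : Polynomial L) • m) := by
    intro c m
    rw [hcompat, hcompat, ← mul_smul, ← mul_smul, X_mul]
  have hXnsmul : ∀ (n : ℕ) (c : L) (m : M), (X^n : Polynomial L) • (c • m)
      = c • ((X^n : Polynomial L) • m) := by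
    intro n
    induction n with
    | zero => intro c m; rw [pow_zero, one_smul, one_smul]
    | succ n ih =>
      intro c m
      rw [pow_succ', mul_smul, mul_smul, ih, hTsmul]
  have hrepr_sum : ∀ (c : Fin d → L) (j : Fin d), e.repr (∑ i : Fin d, c i • e i) j = c j := by
    intro c j
    rw [map_sum, Finsupp.finset_sum_apply]
    have hterm : ∀ i : Fin d, (e.repr (c i • e i)) j = c i * (Finsupp.single i (1:L)) j := by
      intro i; rw [map_smul, Module.Basis.repr_self, Finsupp.smul_apply, smul_eq_mul]
    rw [Finset.sum_congr rfl (fun i _ => hterm i)]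
    simp [Finsupp.single_apply]
  have hXrepr : ∀ (m : M) (j : Fin d), e.repr ((X : Polynomial L) • m) j
      = (if h : 0 < (j:ℕ) then
          e.repr m ⟨(j:ℕ)-1, Nat.lt_of_le_of_lt (Nat.sub_le _ _) j.isLt⟩ else 0)
        - e.repr m ⟨d-1, Nat.sub_lt hd0 one_pos⟩ * f.coeff (j:ℕ) := by
    intro m j
    have hm : (X:Polynomial L) • m = ∑ i : Fin d, e.repr m i • ((X:Polynomial L) • e i) := by
      conv_lhs => rw [← Module.Basis.sum_repr e m]
      rw [Finset.smul_sum]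
      exact Finset.sum_congr rfl fun i _ => hTsmul _ _
    rw [hm, map_sum, Finsupp.finset_sum_apply]
    have hterm : ∀ i : Fin d, (e.repr (e.repr m i • ((X:Polynomial L) • e i))) j
        = e.repr m i * (e.repr ((X:Polynomial L) • e i)) j := by
      intro i; rw [map_smul, Finsupp.smul_apply, smul_eq_mul]
    rw [Finset.sum_congr rfl (fun i _ => hterm i)]
    have hlast_val : (e.repr ((X:Polynomial L) • e ⟨d-1, Nat.sub_lt hd0 one_pos⟩)) j
        = -(f.coeff (j:ℕ)) := by
      rw [hTe2, map_neg]
      have : e.repr (∑ i : Fin d, f.coeff (i:ℕ) • e i) j = f.coeff (j:ℕ) :=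
        hrepr_sum (fun i => f.coeff (i:ℕ)) j
      rw [Finsupp.neg_apply, this]
    have hother : ∀ b : Fin d, b ≠ ⟨d-1, Nat.sub_lt hd0 one_pos⟩ →
        ∀ j' : Fin d, (b:ℕ)+1 ≠ (j':ℕ) →
        e.repr m b * (e.repr ((X:Polynomial L) • e b)) j' = 0 := by
      intro b hb j' hbj
      have hblt : (b:ℕ)+1 < d := by
        have h1 : (b:ℕ) < d := b.isLt
        have h2 : (b:ℕ) ≠ d - 1 := fun h => hb (Fin.ext h)
        omega
      rw [hTe1 b ⟨(b:ℕ)+1, hblt⟩ rfl, Module.Basis.repr_self, Finsupp.single_apply]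
      rw [if_neg (fun h => hbj (by rw [← h]))]
      rw [mul_zero]
    by_cases hj : 0 < (j:ℕ)
    · rw [dif_pos hj]
      set i₀ : Fin d := ⟨(j:ℕ)-1, Nat.lt_of_le_of_lt (Nat.sub_le _ _) j.isLt⟩ with hi₀
      set ilast : Fin d := ⟨d-1, Nat.sub_lt hd0 one_pos⟩ with hilast
      have hi₀lt : (i₀:ℕ)+1 < d := by
        have := j.isLt; simp only [hi₀]; omega
      have hi₀ne : i₀ ≠ ilast := by
        intro h
        have : (i₀:ℕ) = d-1 := by rw [h]
        omega
      have hF0 : e.repr m i₀ * (e.repr ((X:Polynomial L) • e i₀)) j = e.repr m i₀ := by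
        rw [hTe1 i₀ j (by simp only [hi₀]; omega), Module.Basis.repr_self, Finsupp.single_apply,
          if_pos rfl, mul_one]
      rw [← Finset.add_sum_erase _ _ (Finset.mem_univ i₀)]
      rw [Finset.sum_eq_single_of_mem ilast
        (Finset.mem_erase.mpr ⟨Ne.symm hi₀ne, Finset.mem_univ _⟩) ?_]
      · rw [hF0, hlast_val, mul_neg, ← sub_eq_add_neg]
      · intro b hbmem hbne
        have hbne0 : b ≠ i₀ := Finset.ne_of_mem_erase hbmem
        apply hother b hbne
        intro h
        exact hbne0 (Fin.ext (by simp only [hi₀] at h ⊢; omega))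
    · rw [dif_neg hj]
      rw [Finset.sum_eq_single_of_mem ⟨d-1, Nat.sub_lt hd0 one_pos⟩ (Finset.mem_univ _) ?_]
      · rw [hlast_val, mul_neg, zero_sub]
      · intro b _ hbne
        apply hother b hbne
        intro h
        omega
  -- ## the inverse of multiplication by t
  let cl : M → L := fun m => -(e.repr m ⟨0, hd0⟩) * (f.coeff 0)⁻¹
  let cτ : M → Fin d → L := fun m i =>
    if h : (i:ℕ)+1 < d then e.repr m ⟨(i:ℕ)+1, h⟩ + cl m * f.coeff ((i:ℕ)+1) else cl m
  let τ : M → M := fun m => ∑ i : Fin d, cτ m i • e i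
  have hτrepr : ∀ (m : M) (j : Fin d), e.repr (τ m) j = cτ m j := fun m j => hrepr_sum _ j
  have hτT : ∀ m : M, (X:Polynomial L) • τ m = m := by
    intro m
    refine e.ext_elem fun j => ?_
    rw [hXrepr (τ m) j]
    by_cases hj : 0 < (j:ℕ)
    · rw [dif_pos hj, hτrepr, hτrepr]
      simp only [cτ, cl]
      have hc1 : ((j:ℕ)-1)+1 < d := by have := j.isLt; omega
      have hlastc : ¬((((⟨d-1, Nat.sub_lt hd0 one_pos⟩ : Fin d)):ℕ)+1 < d) := by
        show ¬(d-1+1 < d); omega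
      rw [dif_pos hc1, dif_neg hlastc]
      have hjj : (⟨((j:ℕ)-1)+1, hc1⟩ : Fin d) = j :=
        Fin.ext (show ((j:ℕ)-1)+1 = (j:ℕ) by omega)
      rw [hjj]
      have hjj2 : ((j:ℕ)-1)+1 = (j:ℕ) := by omega
      rw [hjj2, add_sub_cancel_right]
    · rw [dif_neg hj, hτrepr]
      simp only [cτ, cl]
      have hlastc : ¬((((⟨d-1, Nat.sub_lt hd0 one_pos⟩ : Fin d)):ℕ)+1 < d) := by
        show ¬(d-1+1 < d); omega
      rw [dif_neg hlastc]
      have hj0 : (j:ℕ) = 0 := by omega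
      rw [hj0]
      rw [zero_sub, neg_mul, neg_mul, neg_neg, mul_assoc, inv_mul_cancel₀ ha0ne, mul_one]
      have hj0' : j = ⟨0, hd0⟩ := Fin.ext hj0
      rw [hj0']
  -- ## the coordinate-wise bound predicate on M
  let Q : ℝ → M → Prop := fun B m => ∀ i : Fin d, P (B + s * ((i:ℕ):ℝ)) (e.repr m i)
  have hQmono : ∀ (B B' : ℝ) (m : M), B' ≤ B → Q B m → Q B' m :=
    fun B B' m h hq i => hPmono _ _ _ (by linarith) (hq i)
  have hd1cast : (((d-1:ℕ)):ℝ) = (d:ℝ) - 1 := by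
    push_cast [Nat.cast_sub (by omega : 1 ≤ d)]
    ring
  have hstepT : ∀ (B : ℝ) (m : M), Q B m → Q (B - s) ((X:Polynomial L) • m) := by
    intro B m hm j
    rw [hXrepr]
    have hlastP : P (B - s + s*((j:ℕ):ℝ))
        (e.repr m ⟨d-1, Nat.sub_lt hd0 one_pos⟩ * f.coeff (j:ℕ)) := by
      have h1 := hm ⟨d-1, Nat.sub_lt hd0 one_pos⟩
      have h2 := hbd j
      have h3 := hPmul _ _ _ _ h1 h2
      refine hPmono _ _ _ ?_ h3
      have : (((⟨d-1, Nat.sub_lt hd0 one_pos⟩ : Fin d):ℕ):ℝ) = (d:ℝ) - 1 := hd1cast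
      rw [this]
      linarith [hr]
    by_cases hj : 0 < (j:ℕ)
    · rw [dif_pos hj]
      refine hPsub _ _ _ ?_ hlastP
      have h1 := hm ⟨(j:ℕ)-1, Nat.lt_of_le_of_lt (Nat.sub_le _ _) j.isLt⟩
      refine hPmono _ _ _ ?_ h1
      have : ((((j:ℕ)-1 : ℕ)):ℝ) = ((j:ℕ):ℝ) - 1 := by
        push_cast [Nat.cast_sub (by omega : 1 ≤ (j:ℕ))]
        ring
      rw [this]
      linarith
    · rw [dif_neg hj, zero_sub]
      exact hPneg _ _ hlastP
  have hstepτ : ∀ (B : ℝ) (m : M), Q B m → Q (B + s) (τ m) := by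
    intro B m hm j
    rw [hτrepr]
    simp only [cτ, cl]
    have hclP : P (B + (r:ℝ)) (-(e.repr m ⟨0, hd0⟩) * (f.coeff 0)⁻¹) := by
      have h1 := hPneg _ _ (hm ⟨0, hd0⟩)
      have h2 := hPmul _ _ _ _ h1 ha0inv
      refine hPmono _ _ _ ?_ h2
      simp only [Fin.val_mk]
      push_cast
      linarith
    by_cases hjd : (j:ℕ)+1 < d
    · rw [dif_pos hjd]
      refine hPadd _ _ _ ?_ ?_
      · refine hPmono _ _ _ ?_ (hm ⟨(j:ℕ)+1, hjd⟩)
        simp only [Fin.val_mk]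
        push_cast
        linarith
      · have h2 := hbd ⟨(j:ℕ)+1, hjd⟩
        have h3 := hPmul _ _ _ _ hclP h2
        refine hPmono _ _ _ ?_ h3
        simp only [Fin.val_mk]
        push_cast
        linarith [hr]
    · rw [dif_neg hjd]
      refine hPmono _ _ _ ?_ hclP
      have hjval : (j:ℕ) = d-1 := by have := j.isLt; omega
      rw [hjval, hd1cast]
      linarith [hr]
  have hiterT : ∀ (n : ℕ) (B : ℝ) (m : M), Q B m → Q (B - n*s) ((X^n : Polynomial L) • m) := by
    intro n
    induction n with
    | zero =>
      intro B m hm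
      rw [pow_zero, one_smul]
      exact hQmono _ _ _ (by norm_num) hm
    | succ n ih =>
      intro B m hm
      rw [pow_succ', mul_smul]
      refine hQmono _ _ _ ?_ (hstepT _ _ (ih B m hm))
      push_cast
      linarith
  have hiterτ : ∀ (n : ℕ) (B : ℝ) (m : M), Q B m → Q (B + n*s) (τ^[n] m) := by
    intro n
    induction n with
    | zero =>
      intro B m hm
      rw [Function.iterate_zero_apply]
      exact hQmono _ _ _ (by norm_num) hm
    | succ n ih =>
      intro B m hm
      rw [Function.iterate_succ_apply']
      refine hQmono _ _ _ ?_ (hstepτ _ _ (ih B m hm))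
      push_cast
      linarith
  have hXτ : ∀ (n : ℕ) (m : M), (X^n : Polynomial L) • (τ^[n] m) = m := by
    intro n
    induction n with
    | zero => intro m; rw [Function.iterate_zero_apply, pow_zero, one_smul]
    | succ n ih =>
      intro m
      rw [Function.iterate_succ_apply', pow_succ, mul_smul, hτT, ih]
  have hscal : ∀ (c : L) (γ : ℝ), P γ c → ∀ (B : ℝ) (m : M), Q B m → Q (B + γ) (c • m) := by
    intro c γ hc B m hm j
    have h1 : e.repr (c • m) j = c * e.repr m j := by
      rw [map_smul, Finsupp.smul_apply, smul_eq_mul]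
    rw [h1]
    exact hPmono _ _ _ (by linarith) (hPmul _ _ _ _ hc (hm j))
  -- ## the lattice
  let Λ : Submodule ↥O M := {
    carrier := {m : M | Q 0 m}
    add_mem' := by
      intro m n hm hn i
      have h1 : e.repr (m + n) i = e.repr m i + e.repr n i := by
        rw [map_add, Finsupp.add_apply]
      rw [Set.mem_setOf_eq] at hm hn
      exact h1 ▸ hPadd _ _ _ (hm i) (hn i)
    zero_mem' := by
      intro i
      simp only [map_zero, Finsupp.coe_zero, Pi.zero_apply]
      exact hP0 _
    smul_mem' := by
      intro c m hm
      rw [Set.mem_setOf_eq] at hm ⊢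
      have h2 := hscal (c:L) 0 ((hPO _).mp c.2) 0 m hm
      exact hQmono _ _ _ (by norm_num) h2
  }
  have hΛdef : ∀ m : M, m ∈ Λ ↔ Q 0 m := fun _ => Iff.rfl
  have hu : ∀ m : M, (Polynomial.C (σ^r) * Polynomial.X^d : Polynomial L) • m
      = (σ^r) • ((X^d : Polynomial L) • m) := by
    intro m; rw [mul_smul, ← hcompat]
  have hufwd : ∀ m : M, Q 0 m → Q 0 ((Polynomial.C (σ^r) * Polynomial.X^d : Polynomial L) • m) := by
    intro m hm
    rw [hu]
    have h1 := hiterT d 0 m hm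
    have h2 := hscal (σ^r) r (hPσ r) _ _ h1
    exact hQmono _ _ _ (by linarith [hr]) h2
  have hubwd : ∀ m : M, Q 0 m → ∃ m', Q 0 m' ∧
      (Polynomial.C (σ^r) * Polynomial.X^d : Polynomial L) • m' = m := by
    intro m hm
    refine ⟨(σ^r)⁻¹ • (τ^[d] m), ?_, ?_⟩
    · have h1 := hiterτ d 0 m hm
      have h2 := hscal ((σ^r)⁻¹) (-(r:ℝ)) (hPσinv r) _ _ h1
      exact hQmono _ _ _ (by linarith [hr]) h2
    · rw [hu, hXnsmul, ← mul_smul, mul_inv_cancel₀ (pow_ne_zero _ hσ0), one_smul, hXτ]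
  let k : Fin d → ℕ := fun i => (⌈s * ((i:ℕ):ℝ)⌉).toNat
  have hkge : ∀ i : Fin d, s * ((i:ℕ):ℝ) ≤ ((k i : ℕ):ℝ) := by
    intro i
    have h1 : (0:ℤ) ≤ ⌈s * ((i:ℕ):ℝ)⌉ := Int.ceil_nonneg (by positivity)
    have h2 : ((k i : ℕ):ℤ) = ⌈s * ((i:ℕ):ℝ)⌉ := Int.toNat_of_nonneg h1
    have h3 := Int.le_ceil (s * ((i:ℕ):ℝ))
    calc s * ((i:ℕ):ℝ) ≤ (⌈s * ((i:ℕ):ℝ)⌉ : ℝ) := h3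
      _ = ((k i : ℕ):ℝ) := by exact_mod_cast h2.symm
  have hgmem : ∀ i : Fin d, (σ^(k i)) • e i ∈ Λ := by
    intro i
    rw [hΛdef]
    intro j
    have h1 : e.repr ((σ^(k i)) • e i) j = σ^(k i) * (Finsupp.single i (1:L)) j := by
      rw [map_smul, Module.Basis.repr_self, Finsupp.smul_apply, smul_eq_mul]
    rw [h1, Finsupp.single_apply]
    by_cases hij : i = j
    · rw [if_pos hij, mul_one]
      refine hPmono _ _ _ ?_ (hPσ (k i))
      rw [← hij]
      linarith [hkge i]
    · rw [if_neg hij, mul_zero]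
      exact hP0 _
  have hΛspan : Λ = Submodule.span ↥O (Set.range (fun i : Fin d => (σ^(k i)) • e i)) := by
    apply le_antisymm
    · intro m hm
      rw [hΛdef] at hm
      rw [show m = ∑ i : Fin d, e.repr m i • e i from (Module.Basis.sum_repr e m).symm]
      apply Submodule.sum_mem
      intro i _
      rcases eq_or_ne (e.repr m i) 0 with h0 | h0
      · rw [h0, zero_smul]
        exact Submodule.zero_mem _
      · have hPi := hm i
        obtain ⟨n, hn, hle⟩ := (hPfin _ _ h0).mp hPi
        have hkn : ((k i:ℕ):ℤ) ≤ n := by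
          have hceil : ⌈s * ((i:ℕ):ℝ)⌉ ≤ n := Int.ceil_le.mpr (by linarith)
          have h2 : (0:ℤ) ≤ ⌈s * ((i:ℕ):ℝ)⌉ := Int.ceil_nonneg (by positivity)
          rw [show ((k i:ℕ):ℤ) = ⌈s * ((i:ℕ):ℝ)⌉ from Int.toNat_of_nonneg h2]
          exact hceil
        have hoO : (e.repr m i * (σ^(k i))⁻¹) ∈ O := by
          refine (hPO _).mpr ?_
          have hP1 : P ((k i:ℕ):ℝ) (e.repr m i) :=
            (hPfin _ _ h0).mpr ⟨n, hn, by exact_mod_cast hkn⟩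
          have h2 := hPmul _ _ _ _ hP1 (hPσinv (k i))
          exact hPmono _ _ _ (by linarith) h2
        have key : e.repr m i • e i = (⟨_, hoO⟩ : ↥O) • ((σ^(k i)) • e i) := by
          show _ = (e.repr m i * (σ^(k i))⁻¹) • ((σ^(k i)) • e i)
          rw [← mul_smul, mul_assoc, inv_mul_cancel₀ (pow_ne_zero _ hσ0), mul_one]
        rw [key]
        exact Submodule.smul_mem _ _ (Submodule.subset_span ⟨i, rfl⟩)
    · rw [Submodule.span_le]
      rintro x ⟨i, rfl⟩
      exact hgmem i
  have hFG : Λ.FG := by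
    rw [hΛspan]
    exact Submodule.fg_span (Set.finite_range _)
  have hbasis : ∃ (n : ℕ) (b : Module.Basis (Fin n) L M), ∀ i, b i ∈ Λ := by
    refine ⟨d, e.unitsSMul (fun i => Units.mk0 (σ^(k i)) (pow_ne_zero _ hσ0)), ?_⟩
    intro i
    rw [Module.Basis.unitsSMul_apply]
    have : (Units.mk0 (σ^(k i)) (pow_ne_zero _ hσ0)) • e i = (σ^(k i)) • e i := rfl
    rw [this]
    exact hgmem i
  have himg : (fun m : M => (Polynomial.C (σ^r) * Polynomial.X^d : Polynomial L) • m) ''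
      (Λ : Set M) = (Λ : Set M) := by
    ext m
    constructor
    · rintro ⟨m₀, hm₀, rfl⟩
      exact hufwd m₀ hm₀
    · intro hm
      obtain ⟨m', hm', hum⟩ := hubwd m hm
      exact ⟨m', hm', hum⟩
  refine ⟨⟨Λ, hFG, hbasis, himg⟩, ?_⟩
  intro _
  refine ⟨Λ, hFG, hbasis, himg, ?_⟩
  intro m hm
  have h1 := hstepτ 0 m hm
  exact ⟨τ m, hQmono _ _ _ (by linarith) h1, hτT m⟩
end

section
/- Let (L, v) be a complete discretely valued skew field, f ∈ L[t] monic of degree d with single-edge Newton polygon of slope s, and M = L[t]/fL[t]. If u, w ∈ ℤ with u ≠ 0 and Λ' is an O-lattice in M with σʷ tᵘ Λ' = Λ', then w/u = s. -/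
open Polynomial

private lemma myDivAux {L : Type*} [DivisionRing L] (f : Polynomial L) (hm : f.Monic) :
    ∀ n : ℕ, ∀ p : Polynomial L, p.natDegree < n →
      ∃ q r : Polynomial L, p = q * f + r ∧ r.degree < f.degree := by
  intro n
  induction n with
  | zero => intro p hp; omega
  | succ n ih =>
    intro p hp
    by_cases hlt : p.degree < f.degree
    · exact ⟨0, p, by simp, hlt⟩
    · push_neg at hlt
      have hp0 : p ≠ 0 := by
        rintro rfl
        simp only [degree_zero] at hlt
        exact absurd (le_bot_iff.mp hlt) (degree_ne_bot.mpr hm.ne_zero)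
      have hfd : f.natDegree ≤ p.natDegree := natDegree_le_natDegree hlt
      set e := p.natDegree - f.natDegree with he
      set a := p.leadingCoeff with ha
      have ha0 : a ≠ 0 := leadingCoeff_ne_zero.mpr hp0
      have hXf : (X ^ e * f).Monic := (monic_X_pow e).mul hm
      have hXfd : (X ^ e * f).natDegree = p.natDegree := by
        rw [natDegree_mul' (by simp [(monic_X_pow e).leadingCoeff, hm.leadingCoeff])]
        simp [he]
        omega
      set T := C a * (X ^ e * f) with hT
      have hTc : T.coeff p.natDegree = a := by
        rw [hT, coeff_C_mul, ← hXfd, hXf.coeff_natDegree, mul_one]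
      have hTd : T.degree = p.degree := by
        apply le_antisymm
        · calc T.degree ≤ (C a).degree + (X ^ e * f).degree := degree_mul_le _ _
            _ ≤ 0 + (X ^ e * f).degree := by
                exact add_le_add degree_C_le le_rfl
            _ = (X ^ e * f).degree := zero_add _
            _ = p.degree := by
                rw [degree_eq_natDegree hXf.ne_zero, hXfd, degree_eq_natDegree hp0]
        · rw [degree_eq_natDegree hp0]
          exact le_degree_of_ne_zero (by rw [hTc]; exact ha0)
      have hTl : p.leadingCoeff = T.leadingCoeff := by
        have : T.natDegree = p.natDegree := natDegree_eq_of_degree_eq_some (by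
          rw [hTd, degree_eq_natDegree hp0])
        rw [leadingCoeff, leadingCoeff, this, hTc]
        rfl
      by_cases hPT : p - T = 0
      · refine ⟨C a * X ^ e, 0, ?_, by simpa using degree_ne_bot.mpr hm.ne_zero |>.bot_lt⟩
        rw [add_zero, mul_assoc, ← hT, ← sub_eq_zero]
        exact hPT
      · have hlt2 : (p - T).degree < p.degree := degree_sub_lt hTd.symm hp0 hTl
        have hnd : (p - T).natDegree < p.natDegree := natDegree_lt_natDegree hPT hlt2
        obtain ⟨q, r, hqr, hr⟩ := ih (p - T) (by omega)
        refine ⟨q + C a * X ^ e, r, ?_, hr⟩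
        have h2 : p = (p - T) + T := by abel
        rw [h2, hqr, hT, add_mul, mul_assoc]
        abel

private lemma myDiv {L : Type*} [DivisionRing L] (f : Polynomial L) (hm : f.Monic)
    (p : Polynomial L) : ∃ q r : Polynomial L, p = q * f + r ∧ r.degree < f.degree :=
  myDivAux f hm (p.natDegree + 1) p (by omega)

private lemma myUnique {L : Type*} [DivisionRing L] (f : Polynomial L) (hm : f.Monic)
    {q r : Polynomial L} (h : q * f = r) (hr : r.degree < f.degree) : r = 0 := by
  rcases eq_or_ne q 0 with rfl | hq
  · rw [← h, zero_mul]
  · exfalso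
    have : (q * f).degree = q.degree + f.degree :=
      degree_mul' (by rw [hm.leadingCoeff, mul_one]; exact leadingCoeff_ne_zero.mpr hq)
    rw [h] at this
    have hfq : f.degree ≤ r.degree := by
      rw [this]
      exact le_add_of_nonneg_left (zero_le_degree_iff.mpr hq)
    exact absurd hr (not_lt.mpr hfq)

private noncomputable def psi : WithTop ℤ → EReal :=
  WithTop.recTopCoe ⊤ (fun n : ℤ => ((n : ℝ) : EReal))

private lemma psi_top : psi ⊤ = ⊤ := rfl

private lemma psi_coe (n : ℤ) : psi (n : WithTop ℤ) = ((n : ℝ) : EReal) := rfl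

private lemma psi_mono : Monotone psi := by
  intro a b hab
  cases b with
  | top => exact le_top
  | coe m =>
      cases a with
      | top => exact absurd hab (by simp)
      | coe n =>
          have : n ≤ m := by exact_mod_cast hab
          simpa [psi_coe] using (by exact_mod_cast this : ((n:ℝ):EReal) ≤ ((m:ℝ):EReal))

private lemma psi_add {α β : ℝ} {a b : WithTop ℤ} (ha : (α : EReal) ≤ psi a)
    (hb : (β : EReal) ≤ psi b) : ((α + β : ℝ) : EReal) ≤ psi (a + b) := by
  cases a with
  | top => simp [psi_top, top_add]
  | coe n =>
      cases b with
      | top => simp [psi_top, add_top]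
      | coe m =>
          have h1 : α ≤ (n : ℝ) := by
            rw [psi_coe] at ha; exact_mod_cast ha
          have h2 : β ≤ (m : ℝ) := by
            rw [psi_coe] at hb; exact_mod_cast hb
          have hc : ((n : ℤ) : WithTop ℤ) + ((m : ℤ) : WithTop ℤ) = (((n + m : ℤ)) : WithTop ℤ) := by
            exact_mod_cast rfl
          rw [hc, psi_coe]
          have : α + β ≤ ((n + m : ℤ) : ℝ) := by push_cast; linarith
          exact_mod_cast this

set_option maxHeartbeats 1000000 in
/-- Uniqueness of the stability slope: let `f` be monic of degree `d > 0` with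
single-edge Newton polygon of slope `s`, `M = L[t]/L[t]f`.  If `u, w ∈ ℤ` with `u ≠ 0`
and `Λ'` is an `O`-lattice in `M` with `σʷ tᵘ Λ' = Λ'` (stated multiplied out as
`σʷ t^{u⁺} Λ' = t^{u⁻} Λ'` where `u = u⁺ − u⁻`), then `w/u = s`. -/
theorem stmt15 {L M : Type*} [DivisionRing L]
    [AddCommGroup M] [Module (Polynomial L) M] [Module L M]
    (hcompat : ∀ (a : L) (m : M), a • m = (Polynomial.C a : Polynomial L) • m)
    (v : L → WithTop ℤ)
    (hv0 : ∀ x : L, v x = ⊤ ↔ x = 0)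
    (hadd : ∀ x y : L, min (v x) (v y) ≤ v (x + y))
    (hmul : ∀ x y : L, v (x * y) = v x + v y)
    (hcomplete : ∀ x : ℕ → L,
      (∀ M' : ℤ, ∃ N : ℕ, ∀ n ≥ N, (M' : WithTop ℤ) ≤ v (x n)) →
      ∃ t : L, ∀ M' : ℤ, ∃ N : ℕ, ∀ n ≥ N,
        (M' : WithTop ℤ) ≤ v (t - ∑ i ∈ Finset.range n, x i))
    (O : Subring L) (hO : (O : Set L) = {x : L | 0 ≤ v x})
    (σ : L) (hσ : v σ = 1)
    (f : Polynomial L) (hmonic : f.Monic) (d : ℕ) (hd : f.natDegree = d) (hd0 : 0 < d)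
    (s : ℝ)
    (hedge : ∀ x ∈ Set.Icc (0 : ℝ) (d : ℝ), NP v f x = ((s * (x - (d : ℝ)) : ℝ) : EReal))
    (hiso : Nonempty (M ≃ₗ[Polynomial L]
      (Polynomial L ⧸ Submodule.span (Polynomial L) {f})))
    (u w : ℤ) (hu : u ≠ 0)
    (Λ' : Submodule ↥O M) (hfg : Λ'.FG)
    (hbasis : ∃ (n : ℕ) (b : Module.Basis (Fin n) L M), ∀ i, b i ∈ Λ')
    (hstable :
      (fun m : M => (Polynomial.C (σ ^ w) * Polynomial.X ^ u.toNat : Polynomial L) • m) ''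
          (Λ' : Set M) =
        (fun m : M => ((Polynomial.X : Polynomial L) ^ (-u).toNat) • m) '' (Λ' : Set M)) :
    (w : ℝ) / (u : ℝ) = s := by
  classical
  obtain ⟨e⟩ := hiso
  -- basic valuation facts
  have hσ0 : σ ≠ 0 := by
    intro h
    rw [(hv0 σ).mpr h] at hσ
    exact absurd hσ.symm (by simp)
  have hv1 : v 1 = 0 := by
    have h := hmul 1 1
    rw [one_mul] at h
    cases h1 : v 1 with
    | top => exact absurd ((hv0 1).mp h1) one_ne_zero
    | coe n =>
        rw [h1] at h
        have : n = n + n := by exact_mod_cast h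
        have : n = 0 := by omega
        simp [this]
  have hvneg : ∀ x : L, v (-x) = v x := by
    have hm1 : v (-1 : L) = 0 := by
      have h := hmul (-1 : L) (-1)
      rw [neg_mul_neg, one_mul, hv1] at h
      cases h1 : v (-1 : L) with
      | top => exact absurd ((hv0 _).mp h1) (by norm_num)
      | coe n =>
          rw [h1] at h
          have : (0 : ℤ) = n + n := by exact_mod_cast h
          have : n = 0 := by omega
          simp [this]
    intro x
    rw [← neg_one_mul, hmul, hm1, zero_add]
  have hvinv : ∀ (x : L) (k : ℤ), x ≠ 0 → v x = (k : ℤ) → v x⁻¹ = ((-k : ℤ) : WithTop ℤ) := by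
    intro x k hx hk
    have h := hmul x⁻¹ x
    rw [inv_mul_cancel₀ hx, hv1, hk] at h
    cases h1 : v x⁻¹ with
    | top => exact absurd ((hv0 _).mp h1) (inv_ne_zero hx)
    | coe m =>
        rw [h1] at h
        have : (0 : ℤ) = m + k := by exact_mod_cast h
        have : m = -k := by omega
        simp [this]
  have hvpow : ∀ (x : L) (j : ℤ), v x = (j : ℤ) → ∀ k : ℕ, v (x ^ k) = ((k * j : ℤ) : WithTop ℤ) := by
    intro x j hx k
    induction k with
    | zero => simpa using hv1
    | succ k ih =>
        rw [pow_succ, hmul, ih, hx, ← WithTop.coe_add]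
        have : ((k : ℤ) * j) + j = (((k + 1 : ℕ) : ℤ)) * j := by push_cast; ring
        rw [this]
  have hσz : ∀ j : ℤ, v (σ ^ j) = (j : WithTop ℤ) := by
    have hn : ∀ n : ℕ, v (σ ^ (n : ℕ)) = ((n : ℤ) : WithTop ℤ) := by
      intro n
      have := hvpow σ 1 (by exact_mod_cast hσ) n
      simpa using this
    intro j
    obtain ⟨n, hj | hj⟩ := Int.eq_nat_or_neg j
    · subst hj
      rw [zpow_natCast]
      exact hn n
    · subst hj
      rw [zpow_neg, zpow_natCast]
      exact hvinv _ n (pow_ne_zero n hσ0) (hn n)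
  have hevv : ∀ x : L, evv v x = psi (v x) := fun _ => rfl
  have hvadd' : ∀ (α : ℝ) (x y : L), (α : EReal) ≤ psi (v x) → (α : EReal) ≤ psi (v y) →
      (α : EReal) ≤ psi (v (x + y)) := by
    intro α x y h1 h2
    refine le_trans ?_ (psi_mono (hadd x y))
    rcases le_total (v x) (v y) with h | h
    · rw [min_eq_left h]; exact h1
    · rw [min_eq_right h]; exact h2
  have hvsub : ∀ (α : ℝ) (x y : L), (α : EReal) ≤ psi (v x) → (α : EReal) ≤ psi (v y) →
      (α : EReal) ≤ psi (v (x - y)) := by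
    intro α x y h1 h2
    rw [sub_eq_add_neg]
    exact hvadd' _ _ _ h1 (by rw [hvneg]; exact h2)
  have hfne : f ≠ 0 := hmonic.ne_zero
  have hfdeg : f.degree = (d : WithBot ℕ) := by
    rw [degree_eq_natDegree hfne, hd]
  have hfc : f.coeff d = 1 := by rw [← hd]; exact hmonic.coeff_natDegree
  -- coefficient bounds from the Newton polygon
  have hcoef : ∀ i : ℕ, i ≤ d →
      ((s * ((i : ℝ) - (d : ℝ)) : ℝ) : EReal) ≤ psi (v (f.coeff i)) := by
    intro i hi
    by_cases hsupp : i ∈ f.support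
    · have hmem : ((i : ℝ)) ∈ Set.Icc (0 : ℝ) (d : ℝ) := by
        constructor
        · positivity
        · exact_mod_cast hi
      have h := hedge (i : ℝ) hmem
      rw [← hevv]
      rw [← h]
      apply sSup_le
      rintro y ⟨a, b, hab, rfl⟩
      exact hab i hsupp
    · rw [notMem_support_iff.mp hsupp, (hv0 _).mpr rfl]
      exact le_top
  -- the constant coefficient
  have hc0ne : f.coeff 0 ≠ 0 := by
    intro h0
    have hV : ∀ i ∈ f.support, (((-(|s| * (d:ℝ))) : ℝ) : EReal) ≤ evv v (f.coeff i) := by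
      intro i hi
      have hid : i ≤ d := hd ▸ le_natDegree_of_mem_supp i hi
      refine le_trans ?_ (hcoef i hid)
      rw [EReal.coe_le_coe_iff]
      have h1 : |s * ((i:ℝ) - d)| ≤ |s| * d := by
        rw [abs_mul]
        apply mul_le_mul_of_nonneg_left _ (abs_nonneg s)
        rw [abs_le]
        constructor
        · have : (0:ℝ) ≤ (i:ℝ) := by positivity
          linarith
        · have : (i:ℝ) ≤ d := by exact_mod_cast hid
          linarith
      have := abs_le.mp h1
      linarith [this.1]
    have hmem0 : ((0:ℝ)) ∈ Set.Icc (0 : ℝ) (d : ℝ) := by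
      constructor
      · exact le_refl 0
      · positivity
    have hkey : ∀ n : ℕ, ((-(n : ℝ)) * (0:ℝ) + ((n : ℝ) + -(|s| * (d:ℝ))) : ℝ) ≤ s * ((0:ℝ) - d) := by
      intro n
      have hmemS : (((-(n:ℝ)) * (0:ℝ) + ((n:ℝ) + -(|s| * (d:ℝ))) : ℝ) : EReal) ∈
          {y : EReal | ∃ a b : ℝ,
            (∀ i ∈ f.support, ((a * i + b : ℝ) : EReal) ≤ evv v (f.coeff i)) ∧
            y = ((a * (0:ℝ) + b : ℝ) : EReal)} := by
        refine ⟨-(n:ℝ), (n:ℝ) + -(|s| * (d:ℝ)), fun i hi => ?_, rfl⟩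
        have hi1 : 1 ≤ i := by
          rcases Nat.eq_zero_or_pos i |>.symm with h | h
          · exact h
          · exact absurd (h ▸ hi) (by simp [mem_support_iff, h0])
        refine le_trans ?_ (hV i hi)
        rw [EReal.coe_le_coe_iff]
        have : (1:ℝ) ≤ (i:ℝ) := by exact_mod_cast hi1
        nlinarith [Nat.cast_nonneg (α := ℝ) n]
      have h2 : (((-(n:ℝ)) * (0:ℝ) + ((n:ℝ) + -(|s| * (d:ℝ))) : ℝ) : EReal) ≤ NP v f 0 :=
        le_sSup hmemS
      rw [hedge 0 hmem0] at h2
      exact EReal.coe_le_coe_iff.mp h2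
    obtain ⟨n, hn⟩ := exists_nat_gt (s * ((0:ℝ) - d) + |s| * d)
    have := hkey n
    simp only [mul_zero, zero_add] at this
    linarith
  obtain ⟨z, hz⟩ : ∃ z : ℤ, v (f.coeff 0) = (z : WithTop ℤ) := by
    have : v (f.coeff 0) ≠ ⊤ := fun h => hc0ne ((hv0 _).mp h)
    obtain ⟨z, hz⟩ := WithTop.ne_top_iff_exists.mp this
    exact ⟨z, hz.symm⟩
  have hmem0 : ((0:ℝ)) ∈ Set.Icc (0 : ℝ) (d : ℝ) := ⟨le_refl 0, by positivity⟩
  have hzge : -(s * (d:ℝ)) ≤ (z : ℝ) := by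
    have h := hcoef 0 (by omega)
    rw [hz, psi_coe, EReal.coe_le_coe_iff] at h
    push_cast at h
    linarith
  have hzr : (z : ℝ) = -(s * d) := by
    by_contra hne
    have hgt : -(s * (d:ℝ)) < (z : ℝ) := lt_of_le_of_ne hzge (Ne.symm hne)
    set δ : ℝ := (z : ℝ) + s * d with hδ
    have hδ0 : 0 < δ := by rw [hδ]; linarith
    have hmemS : (((s - δ) * (0:ℝ) + (-(s * (d:ℝ)) + δ) : ℝ) : EReal) ∈
        {y : EReal | ∃ a b : ℝ,
          (∀ i ∈ f.support, ((a * i + b : ℝ) : EReal) ≤ evv v (f.coeff i)) ∧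
          y = ((a * (0:ℝ) + b : ℝ) : EReal)} := by
      refine ⟨s - δ, -(s * (d:ℝ)) + δ, fun i hi => ?_, rfl⟩
      have hid : i ≤ d := hd ▸ le_natDegree_of_mem_supp i hi
      rcases Nat.eq_zero_or_pos i |>.symm with hi1 | hi1
      · refine le_trans ?_ (hcoef i hid)
        rw [EReal.coe_le_coe_iff]
        have h1 : (1:ℝ) ≤ (i:ℝ) := by exact_mod_cast hi1
        nlinarith
      · subst hi1
        rw [hevv, hz, psi_coe, EReal.coe_le_coe_iff]
        push_cast
        rw [hδ]
        ring_nf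
        linarith
    have h2 : (((s - δ) * (0:ℝ) + (-(s * (d:ℝ)) + δ) : ℝ) : EReal) ≤ NP v f 0 :=
      le_sSup hmemS
    rw [hedge 0 hmem0] at h2
    rw [EReal.coe_le_coe_iff] at h2
    have : (s - δ) * 0 + (-(s * (d:ℝ)) + δ) = -(s*(d:ℝ)) + δ := by ring
    rw [this] at h2
    have : s * ((0:ℝ) - d) = -(s * (d:ℝ)) := by ring
    rw [this] at h2
    linarith
  -- reduction machinery
  have hmemJ : ∀ q : Polynomial L, q * f ∈ Submodule.span (Polynomial L) {f} :=
    fun q => Submodule.mem_span_singleton.mpr ⟨q, rfl⟩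
  have hred : ∀ nn : Polynomial L ⧸ Submodule.span (Polynomial L) {f},
      ∃ p : Polynomial L, p.degree < f.degree ∧ (Submodule.Quotient.mk p : _) = nn := by
    intro nn
    obtain ⟨p0, rfl⟩ := Submodule.Quotient.mk_surjective _ nn
    obtain ⟨q, r, hqr, hr⟩ := myDiv f hmonic p0
    refine ⟨r, hr, ?_⟩
    rw [Submodule.Quotient.eq]
    have h3 : r - p0 = (-q) * f := by rw [hqr, neg_mul]; abel
    rw [h3]
    exact hmemJ (-q)
  choose rd hrd1 hrd2 using hred
  have huniq : ∀ p₁ p₂ : Polynomial L, p₁.degree < f.degree → p₂.degree < f.degree →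
      (Submodule.Quotient.mk p₁ : Polynomial L ⧸ Submodule.span (Polynomial L) {f}) =
        Submodule.Quotient.mk p₂ → p₁ = p₂ := by
    intro p₁ p₂ h1 h2 h
    obtain ⟨q, hq⟩ := Submodule.mem_span_singleton.mp ((Submodule.Quotient.eq _).mp h)
    have hqf : q * f = p₁ - p₂ := by rw [← hq]; rfl
    have := myUnique f hmonic hqf (lt_of_le_of_lt (degree_sub_le _ _) (max_lt h1 h2))
    exact sub_eq_zero.mp this
  set Rm : M → Polynomial L := fun m => rd (e m) with hRm
  have hRdeg : ∀ m : M, (Rm m).degree < f.degree := fun m => hrd1 _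
  have hRmk : ∀ m : M, (Submodule.Quotient.mk (Rm m) : _) = e m := fun m => hrd2 _
  have hRuniq : ∀ (m : M) (p : Polynomial L), p.degree < f.degree →
      (Submodule.Quotient.mk p : Polynomial L ⧸ Submodule.span (Polynomial L) {f}) = e m →
      Rm m = p :=
    fun m p hp he' => huniq _ _ (hRdeg m) hp (by rw [hRmk m, he'])
  have hbot : (⊥ : WithBot ℕ) < f.degree := by rw [hfdeg]; exact bot_lt_iff_ne_bot.mpr (by simp)
  have hR0 : Rm 0 = 0 := hRuniq 0 0 (by simpa [degree_zero] using hbot) (by simp)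
  have hRadd : ∀ m₁ m₂ : M, Rm (m₁ + m₂) = Rm m₁ + Rm m₂ := by
    intro m₁ m₂
    apply hRuniq
    · exact lt_of_le_of_lt (degree_add_le _ _) (max_lt (hRdeg m₁) (hRdeg m₂))
    · rw [map_add]
      rw [← hRmk m₁, ← hRmk m₂]
      rfl
  have hRC : ∀ (a : L) (m : M), Rm ((C a : Polynomial L) • m) = C a * Rm m := by
    intro a m
    apply hRuniq
    · refine lt_of_le_of_lt ?_ (hRdeg m)
      calc (C a * Rm m).degree ≤ (C a).degree + (Rm m).degree := degree_mul_le _ _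
        _ ≤ 0 + (Rm m).degree := add_le_add degree_C_le le_rfl
        _ = (Rm m).degree := zero_add _
    · rw [show (C a * Rm m : Polynomial L) = (C a : Polynomial L) • Rm m from rfl,
        Submodule.Quotient.mk_smul, hRmk, ← map_smul]
  have hRX : ∀ m : M,
      Rm ((X : Polynomial L) • m) = X * Rm m - C ((Rm m).coeff (d-1)) * f := by
    intro m
    apply hRuniq
    · rw [hfdeg, degree_lt_iff_coeff_zero]
      intro j hj
      rw [coeff_sub, coeff_C_mul]
      rcases eq_or_lt_of_le hj with heq | hj'
      · have h1 : (X * Rm m).coeff j = (Rm m).coeff (d-1) := by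
          obtain ⟨j', hjj⟩ : ∃ j', j = j'+1 := ⟨d-1, by omega⟩
          rw [hjj, coeff_X_mul]
          congr 1
          omega
        rw [h1, ← heq, hfc, mul_one, sub_self]
      · have h1 : (X * Rm m).coeff j = 0 := by
          obtain ⟨j', rfl⟩ : ∃ j', j = j'+1 := ⟨j-1, by omega⟩
          rw [coeff_X_mul]
          refine coeff_eq_zero_of_degree_lt (lt_of_lt_of_le (hRdeg m) ?_)
          rw [hfdeg]
          exact_mod_cast (by omega : d ≤ j')
        have h2 : f.coeff j = 0 := coeff_eq_zero_of_natDegree_lt (by omega)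
        rw [h1, h2, mul_zero, sub_zero]
    · have h1 : (Submodule.Quotient.mk (X * Rm m - C ((Rm m).coeff (d-1)) * f) :
          Polynomial L ⧸ Submodule.span (Polynomial L) {f}) =
          Submodule.Quotient.mk (X * Rm m) := by
        rw [Submodule.Quotient.eq]
        have h4 : (X * Rm m - C ((Rm m).coeff (d-1)) * f) - X * Rm m
            = (- C ((Rm m).coeff (d-1))) * f := by rw [neg_mul]; abel
        rw [h4]
        exact hmemJ _
      rw [h1, show (X * Rm m : Polynomial L) = (X : Polynomial L) • Rm m from rfl,
        Submodule.Quotient.mk_smul, hRmk, ← map_smul]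
  -- the "valuation ≥" predicate on M
  set Bm : ℝ → M → Prop :=
    fun x m => ∀ i : ℕ, ((x + s * (i:ℝ) : ℝ) : EReal) ≤ psi (v ((Rm m).coeff i)) with hBmdef
  have hBmono : ∀ (x' x : ℝ) (m : M), x' ≤ x → Bm x m → Bm x' m := by
    intro x' x m hle h i
    refine le_trans ?_ (h i)
    rw [EReal.coe_le_coe_iff]
    linarith
  have hB0 : ∀ x : ℝ, Bm x 0 := by
    intro x i
    rw [hR0]
    have : v ((0 : Polynomial L).coeff i) = ⊤ := (hv0 _).mpr (by simp)
    rw [this]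
    exact le_top
  have hBadd : ∀ (x : ℝ) (m₁ m₂ : M), Bm x m₁ → Bm x m₂ → Bm x (m₁ + m₂) := by
    intro x m₁ m₂ h1 h2 i
    rw [hRadd, coeff_add]
    exact hvadd' _ _ _ (h1 i) (h2 i)
  have hBC : ∀ (a : L) (k : ℤ), v a = (k : WithTop ℤ) →
      ∀ (x : ℝ) (m : M), Bm x m → Bm (x + (k:ℝ)) ((C a : Polynomial L) • m) := by
    intro a k hk x m h i
    rw [hRC, coeff_C_mul, hmul, hk]
    have hka : ((k:ℝ) : EReal) ≤ psi ((k : WithTop ℤ)) := le_of_eq (psi_coe k).symm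
    have := psi_add hka (h i)
    refine le_trans (le_of_eq ?_) this
    rw [EReal.coe_eq_coe_iff]
    ring
  have hBCrev : ∀ (a : L) (k : ℤ), a ≠ 0 → v a = (k : WithTop ℤ) →
      ∀ (x : ℝ) (m : M), Bm x ((C a : Polynomial L) • m) → Bm (x - (k:ℝ)) m := by
    intro a k ha hk x m h
    have h2 := hBC a⁻¹ (-k) (hvinv a k ha hk) x _ h
    have h3 : (C a⁻¹ : Polynomial L) • ((C a : Polynomial L) • m) = m := by
      rw [smul_smul, ← C_mul, inv_mul_cancel₀ ha, C_1, one_smul]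
    rw [h3] at h2
    refine hBmono _ _ _ (le_of_eq ?_) h2
    push_cast
    ring
  -- slope of multiplication by X
  have hL1 : ∀ (x : ℝ) (m : M), Bm x m → Bm (x - s) ((X : Polynomial L) • m) := by
    intro x m h i
    rcases Nat.lt_or_ge i d with hi | hi
    · rw [hRX m, coeff_sub, coeff_C_mul]
      apply hvsub
      · rcases i with _ | i'
        · have : v ((X * Rm m).coeff 0) = ⊤ := by
            rw [mul_coeff_zero, coeff_X_zero, zero_mul]
            exact (hv0 _).mpr rfl
          rw [this]; exact le_top
        · rw [coeff_X_mul]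
          refine le_trans (le_of_eq ?_) (h i')
          rw [EReal.coe_eq_coe_iff]
          push_cast
          ring
      · rw [hmul]
        have h1 : ((x + s * ((d:ℝ)-1) : ℝ) : EReal) ≤ psi (v ((Rm m).coeff (d-1))) := by
          refine le_trans (le_of_eq ?_) (h (d-1))
          rw [EReal.coe_eq_coe_iff]
          have : ((d-1 : ℕ) : ℝ) = (d:ℝ) - 1 := by
            rw [Nat.cast_sub (by omega)]; norm_num
          rw [this]
        have h2 := hcoef i (by omega)
        have := psi_add h1 h2
        refine le_trans (le_of_eq ?_) this
        rw [EReal.coe_eq_coe_iff]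
        ring
    · have : (Rm ((X : Polynomial L) • m)).coeff i = 0 := by
        refine coeff_eq_zero_of_degree_lt (lt_of_lt_of_le (hRdeg _) ?_)
        rw [hfdeg]
        exact_mod_cast hi
      rw [this, (hv0 _).mpr rfl]
      exact le_top
  have hL2 : ∀ (x : ℝ) (m : M), Bm x ((X : Polynomial L) • m) → Bm (x + s) m := by
    intro x m h
    have hid : Rm ((X : Polynomial L) • m) = X * Rm m - C ((Rm m).coeff (d-1)) * f := hRX m
    have h0 : (Rm ((X : Polynomial L) • m)).coeff 0 = -((Rm m).coeff (d-1) * f.coeff 0) := by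
      rw [hid, coeff_sub, mul_coeff_zero, coeff_X_zero, zero_mul, coeff_C_mul, zero_sub]
    have hdm1 : (Rm m).coeff (d-1) = -((Rm ((X : Polynomial L) • m)).coeff 0) * (f.coeff 0)⁻¹ := by
      rw [eq_mul_inv_iff_mul_eq₀ hc0ne, h0, neg_neg]
    have hBd : ((x + s * (d:ℝ) : ℝ) : EReal) ≤ psi (v ((Rm m).coeff (d-1))) := by
      rw [hdm1, neg_mul, hvneg, hmul, hvinv _ z hc0ne hz]
      have h1 := h 0
      have hkb : (((-z : ℤ) : ℝ) : EReal) ≤ psi (((-z : ℤ) : WithTop ℤ)) := le_of_eq (psi_coe _).symm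
      have := psi_add h1 hkb
      refine le_trans (le_of_eq ?_) this
      rw [EReal.coe_eq_coe_iff]
      push_cast
      rw [hzr]
      ring
    intro i
    rcases Nat.lt_or_ge i d with hi | hi
    · rcases Nat.lt_or_ge i (d-1) with hi' | hi''
      · have hco : (Rm m).coeff i = (Rm ((X : Polynomial L) • m)).coeff (i+1)
            + (Rm m).coeff (d-1) * f.coeff (i+1) := by
          rw [hid, coeff_sub, coeff_X_mul, coeff_C_mul]
          abel
        rw [hco]
        apply hvadd'
        · refine le_trans (le_of_eq ?_) (h (i+1))
          rw [EReal.coe_eq_coe_iff]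
          push_cast
          ring
        · rw [hmul]
          have h2 := hcoef (i+1) (by omega)
          have := psi_add hBd h2
          refine le_trans (le_of_eq ?_) this
          rw [EReal.coe_eq_coe_iff]
          push_cast
          ring
      · have : i = d - 1 := le_antisymm (Nat.le_sub_one_of_lt hi) hi''
        rw [this]
        refine le_trans (le_of_eq ?_) hBd
        rw [EReal.coe_eq_coe_iff]
        have : ((d-1 : ℕ) : ℝ) = (d:ℝ) - 1 := by
          rw [Nat.cast_sub (by omega)]; norm_num
        rw [this]
        ring
    · have : (Rm m).coeff i = 0 := by
        refine coeff_eq_zero_of_degree_lt (lt_of_lt_of_le (hRdeg _) ?_)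
        rw [hfdeg]
        exact_mod_cast hi
      rw [this, (hv0 _).mpr rfl]
      exact le_top
  have hLX : ∀ (j : ℕ) (x : ℝ) (m : M), Bm x m →
      Bm (x - s * (j:ℝ)) (((X : Polynomial L)^j) • m) := by
    intro j
    induction j with
    | zero =>
        intro x m h
        rw [pow_zero, one_smul]
        exact hBmono _ _ _ (by norm_num) h
    | succ j ih =>
        intro x m h
        have h1 := hL1 x m h
        have h2 := ih (x - s) _ h1
        rw [pow_succ, mul_smul]
        exact hBmono _ _ _ (le_of_eq (by push_cast; ring)) h2
  have hLXrev : ∀ (j : ℕ) (x : ℝ) (m : M), Bm x (((X : Polynomial L)^j) • m) →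
      Bm (x + s * (j:ℝ)) m := by
    intro j
    induction j with
    | zero =>
        intro x m h
        rw [pow_zero, one_smul] at h
        exact hBmono _ _ _ (by norm_num) h
    | succ j ih =>
        intro x m h
        rw [pow_succ, mul_smul] at h
        have h2 := ih x _ h
        have h3 := hL2 (x + s * (j:ℝ)) m h2
        exact hBmono _ _ _ (le_of_eq (by push_cast; ring)) h3
  -- every element satisfies some bound
  have hBval : ∀ (m : M) (hs' : (Rm m).support.Nonempty),
      Bm ((Rm m).support.inf' hs'
        (fun i => ((WithTop.untopD 0 (v ((Rm m).coeff i)) : ℤ) : ℝ) - s * (i:ℝ))) m := by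
    intro m hs' i
    by_cases hi : i ∈ (Rm m).support
    · have hne : (Rm m).coeff i ≠ 0 := mem_support_iff.mp hi
      have hvne : v ((Rm m).coeff i) ≠ ⊤ := fun h => hne ((hv0 _).mp h)
      obtain ⟨nn, hnn⟩ := WithTop.ne_top_iff_exists.mp hvne
      rw [← hnn, psi_coe, EReal.coe_le_coe_iff]
      have h1 := Finset.inf'_le
        (fun i => ((WithTop.untopD 0 (v ((Rm m).coeff i)) : ℤ) : ℝ) - s * (i:ℝ)) hi
      have h2 : (WithTop.untopD 0 (v ((Rm m).coeff i)) : ℤ) = nn := by rw [← hnn]; rfl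
      rw [h2] at h1
      linarith
    · rw [notMem_support_iff.mp hi, (hv0 _).mpr rfl]
      exact le_top
  have hBex : ∀ m : M, ∃ x : ℝ, Bm x m := by
    intro m
    by_cases hs' : (Rm m).support.Nonempty
    · exact ⟨_, hBval m hs'⟩
    · refine ⟨0, fun i => ?_⟩
      have : (Rm m).coeff i = 0 := notMem_support_iff.mp (by
        intro hmem
        exact hs' ⟨i, hmem⟩)
      rw [this, (hv0 _).mpr rfl]
      exact le_top
  -- a uniform lower bound on the lattice
  obtain ⟨S, hS⟩ := hfg
  have hSA : ∀ T : Finset M, ∃ A : ℝ, ∀ g ∈ T, Bm A g := by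
    intro T
    induction T using Finset.induction_on with
    | empty => exact ⟨0, by simp⟩
    | @insert a T' hnotmem ih =>
        obtain ⟨A, hA⟩ := ih
        obtain ⟨x, hx⟩ := hBex a
        refine ⟨min x A, fun g hg => ?_⟩
        rcases Finset.mem_insert.mp hg with rfl | hg'
        · exact hBmono _ _ _ (min_le_left _ _) hx
        · exact hBmono _ _ _ (min_le_right _ _) (hA g hg')
  obtain ⟨A, hA⟩ := hSA S
  have hAΛ : ∀ y ∈ Λ', Bm A y := by
    intro y hy
    rw [← hS] at hy
    refine Submodule.span_induction (p := fun y _ => Bm A y) ?_ ?_ ?_ ?_ hy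
    · intro g hg
      exact hA g (by exact_mod_cast hg)
    · exact hB0 A
    · intro a b _ _ h1 h2
      exact hBadd A a b h1 h2
    · intro o y _ hy1
      have hov : 0 ≤ v (o : L) := by
        have hmem : ((o : L) ∈ (O : Set L)) := o.2
        rw [hO] at hmem
        exact hmem
      rcases eq_or_ne ((o : L)) 0 with h0 | hne
      · have hsm : o • y = ((0 : L)) • y := by rw [← h0]; rfl
        rw [hsm, zero_smul]
        exact hB0 A
      · have hvne : v (o : L) ≠ ⊤ := fun h => hne ((hv0 _).mp h)
        obtain ⟨kk, hkk⟩ := WithTop.ne_top_iff_exists.mp hvne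
        have hk0 : (0:ℤ) ≤ kk := by
          rw [← hkk] at hov
          exact_mod_cast hov
        have hsm : o • y = ((C ((o : L)) : Polynomial L)) • y := by
          rw [← hcompat]
          rfl
        rw [hsm]
        refine hBmono _ _ _ ?_ (hBC (o : L) kk hkk.symm A y hy1)
        have : (0:ℝ) ≤ (kk:ℝ) := by exact_mod_cast hk0
        linarith
  -- maximal bound is attained for nonzero elements
  have hAt : ∀ m : M, m ≠ 0 → ∃ c : ℝ, Bm c m ∧ ∀ x : ℝ, Bm x m → x ≤ c := by
    intro m hm
    have hRne : Rm m ≠ 0 := by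
      intro h
      apply hm
      have h1 : e m = 0 := by
        rw [← hRmk m, h]
        exact (Submodule.Quotient.mk_eq_zero _).mpr (Submodule.zero_mem _)
      exact (LinearEquiv.map_eq_zero_iff e).mp h1
    have hs' : (Rm m).support.Nonempty := by
      rw [Finset.nonempty_iff_ne_empty]
      intro h
      exact hRne (support_eq_empty.mp h)
    refine ⟨_, hBval m hs', ?_⟩
    intro x hx
    obtain ⟨i, hi, hFi⟩ := Finset.exists_mem_eq_inf' hs'
      (fun i => ((WithTop.untopD 0 (v ((Rm m).coeff i)) : ℤ) : ℝ) - s * (i:ℝ))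
    have hne : (Rm m).coeff i ≠ 0 := mem_support_iff.mp hi
    obtain ⟨nn, hnn⟩ := WithTop.ne_top_iff_exists.mp (fun h => hne ((hv0 _).mp h))
    have h1 := hx i
    rw [← hnn, psi_coe, EReal.coe_le_coe_iff] at h1
    have h2 : (WithTop.untopD 0 (v ((Rm m).coeff i)) : ℤ) = nn := by rw [← hnn]; rfl
    rw [hFi, h2]
    linarith
  -- M is nontrivial; pick a nonzero lattice element
  have hone : (Submodule.Quotient.mk 1 : Polynomial L ⧸ Submodule.span (Polynomial L) {f}) ≠ 0 := by
    rw [Ne, Submodule.Quotient.mk_eq_zero]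
    intro h1
    obtain ⟨q, hq⟩ := Submodule.mem_span_singleton.mp h1
    have h2 : q * f = 1 := hq
    have hqne : q ≠ 0 := by
      rintro rfl
      rw [zero_mul] at h2
      exact one_ne_zero h2.symm
    have h3 := degree_mul' (p := q) (q := f)
      (by rw [hmonic.leadingCoeff, mul_one]; exact leadingCoeff_ne_zero.mpr hqne)
    rw [h2, degree_one, hfdeg, degree_eq_natDegree hqne] at h3
    have h4 : (0 : WithBot ℕ) = ((q.natDegree + d : ℕ) : WithBot ℕ) := by
      rw [h3]
      exact_mod_cast rfl
    have : (0 : ℕ) = q.natDegree + d := by exact_mod_cast h4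
    omega
  have hntN : Nontrivial (Polynomial L ⧸ Submodule.span (Polynomial L) {f}) :=
    nontrivial_of_ne _ _ hone
  have hntM : Nontrivial M := Equiv.nontrivial e.toEquiv
  obtain ⟨n, bb, hb⟩ := hbasis
  obtain ⟨i0⟩ : Nonempty (Fin n) := bb.index_nonempty
  have hm₀Λ : bb i0 ∈ Λ' := hb i0
  have hm₀ne : bb i0 ≠ 0 := bb.ne_zero i0
  obtain ⟨c, hc1, hc2⟩ := hAt (bb i0) hm₀ne
  -- stability, iterated
  set P : Polynomial L := C (σ ^ w) * X ^ (u.toNat) with hPdef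
  set Q : Polynomial L := (X : Polynomial L) ^ ((-u).toNat) with hQdef
  have hstab1 : (fun m : M => P • m) '' (Λ' : Set M) = (fun m : M => Q • m) '' (Λ' : Set M) :=
    hstable
  have hQk : ∀ k : ℕ, Q ^ k = (X : Polynomial L) ^ (k * (-u).toNat) := by
    intro k
    rw [hQdef, ← pow_mul, mul_comm]
  have hPQ : ∀ k : ℕ, P * Q ^ k = Q ^ k * P := by
    intro k
    rw [hQk k]
    exact (X_pow_mul).symm
  have hstab : ∀ k : ℕ,
      (fun m : M => (P ^ k) • m) '' (Λ' : Set M) = (fun m : M => (Q ^ k) • m) '' (Λ' : Set M) := by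
    intro k
    induction k with
    | zero => simp
    | succ k ih =>
        have e1 : (fun m : M => (P ^ (k+1)) • m) '' (Λ' : Set M)
            = (fun m : M => P • m) '' ((fun m : M => (P ^ k) • m) '' (Λ' : Set M)) := by
          rw [Set.image_image]
          simp only [← mul_smul, ← pow_succ']
        have e2 : (fun m : M => P • m) '' ((fun m : M => (Q ^ k) • m) '' (Λ' : Set M))
            = (fun m : M => (Q ^ k) • m) '' ((fun m : M => P • m) '' (Λ' : Set M)) := by
          rw [Set.image_image, Set.image_image]
          simp only [← mul_smul, hPQ k]
        have e3 : (fun m : M => (Q ^ k) • m) '' ((fun m : M => Q • m) '' (Λ' : Set M))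
            = (fun m : M => (Q ^ (k+1)) • m) '' (Λ' : Set M) := by
          rw [Set.image_image]
          simp only [← mul_smul, ← pow_succ]
        rw [e1, ih, e2, hstab1, e3]
  have hPk : ∀ k : ℕ, P ^ k = C ((σ ^ w) ^ k) * X ^ (k * u.toNat) := by
    intro k
    induction k with
    | zero => simp
    | succ k ih =>
        rw [pow_succ, ih, hPdef]
        rw [mul_assoc, ← mul_assoc (X ^ (k * u.toNat)), X_pow_mul, mul_assoc, ← pow_add,
          ← mul_assoc, ← C_mul, ← pow_succ]
        congr 2
        ring
  have hσwk : ∀ k : ℕ, v ((σ ^ w) ^ k) = (((k : ℤ) * w : ℤ) : WithTop ℤ) :=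
    fun k => hvpow (σ ^ w) w (hσz w) k
  have hσwk0 : (σ ^ w) ≠ 0 := zpow_ne_zero w hσ0
  have hpq : ((u.toNat : ℝ)) - (((-u).toNat : ℝ)) = (u : ℝ) := by
    have := Int.toNat_sub_toNat_neg u
    exact_mod_cast congrArg (Int.cast : ℤ → ℝ) this
  -- direction 1 : w - s u ≤ 0-ish
  have hdir1 : ∀ k : ℕ, A + (k:ℝ) * ((w:ℝ) - s * (u:ℝ)) ≤ c := by
    intro k
    have hmem1 : (Q ^ k) • (bb i0) ∈ (fun m : M => (Q ^ k) • m) '' (Λ' : Set M) :=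
      ⟨bb i0, hm₀Λ, rfl⟩
    rw [← hstab k] at hmem1
    obtain ⟨y, hyΛ, hy⟩ := hmem1
    have hy' : (P ^ k) • y = (Q ^ k) • (bb i0) := hy
    have hb1 := hLX (k * u.toNat) A y (hAΛ y hyΛ)
    have hb2 := hBC ((σ ^ w) ^ k) ((k : ℤ) * w) (hσwk k) _ _ hb1
    have heq : (C ((σ ^ w) ^ k) : Polynomial L) • (((X : Polynomial L) ^ (k * u.toNat)) • y)
        = ((X : Polynomial L) ^ (k * (-u).toNat)) • (bb i0) := by
      rw [← mul_smul, ← hPk k, hy', hQk k]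
    rw [heq] at hb2
    have hb4 := hLXrev (k * (-u).toNat) _ (bb i0) hb2
    have hb5 := hc2 _ hb4
    have harith : A + (k:ℝ) * ((w:ℝ) - s * (u:ℝ))
        = A - s * ((k * u.toNat : ℕ) : ℝ) + (((k:ℤ) * w : ℤ) : ℝ) + s * ((k * (-u).toNat : ℕ) : ℝ) := by
      rw [← hpq]
      push_cast
      ring
    rw [harith]
    exact hb5
  -- direction 2 : w - s u ≥ 0-ish
  have hdir2 : ∀ k : ℕ, A - (k:ℝ) * ((w:ℝ) - s * (u:ℝ)) ≤ c := by
    intro k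
    have hmem1 : (P ^ k) • (bb i0) ∈ (fun m : M => (P ^ k) • m) '' (Λ' : Set M) :=
      ⟨bb i0, hm₀Λ, rfl⟩
    rw [hstab k] at hmem1
    obtain ⟨y, hyΛ, hy⟩ := hmem1
    have hy' : (Q ^ k) • y = (P ^ k) • (bb i0) := hy
    have hb1 := hLX (k * (-u).toNat) A y (hAΛ y hyΛ)
    rw [← hQk k] at hb1
    rw [hy'] at hb1
    have heq : (P ^ k) • (bb i0)
        = (C ((σ ^ w) ^ k) : Polynomial L) • (((X : Polynomial L) ^ (k * u.toNat)) • (bb i0)) := by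
      rw [← mul_smul, ← hPk k]
    rw [heq] at hb1
    have hb2 := hBCrev ((σ ^ w) ^ k) ((k : ℤ) * w) (pow_ne_zero k hσwk0) (hσwk k) _ _ hb1
    have hb3 := hLXrev (k * u.toNat) _ (bb i0) hb2
    have hb5 := hc2 _ hb3
    have harith : A - (k:ℝ) * ((w:ℝ) - s * (u:ℝ))
        = A - s * ((k * (-u).toNat : ℕ) : ℝ) - (((k:ℤ) * w : ℤ) : ℝ) + s * ((k * u.toNat : ℕ) : ℝ) := by
      rw [← hpq]
      push_cast
      ring
    rw [harith]
    exact hb5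
  -- conclusion
  have hzero : (w:ℝ) - s * (u:ℝ) = 0 := by
    by_contra hne
    rcases lt_or_gt_of_ne hne with hlt | hgt
    · obtain ⟨k, hk⟩ := exists_nat_gt ((c - A) / (-( (w:ℝ) - s * (u:ℝ))))
      have hpos : 0 < -((w:ℝ) - s * (u:ℝ)) := by linarith
      have h1 := hdir2 k
      rw [div_lt_iff₀ hpos] at hk
      linarith
    · obtain ⟨k, hk⟩ := exists_nat_gt ((c - A) / ((w:ℝ) - s * (u:ℝ)))
      have hpos : 0 < ((w:ℝ) - s * (u:ℝ)) := hgt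
      have h1 := hdir1 k
      rw [div_lt_iff₀ hpos] at hk
      linarith
  have hu' : (u : ℝ) ≠ 0 := Int.cast_ne_zero.mpr hu
  rw [div_eq_iff hu']
  linarith
end

section
/- Let (L, v) be a complete discretely valued skew field with uniformizer σ, f ∈ L[t] monic whose Newton polygon is a single edge with positive slope, M = L[t]/fL[t], and Λ an O-lattice in M. Then there exists k₀ ≥ 0 such that for all k ≥ k₀ one has tᵏΛ ⊇ σ⁻¹Λ. -/
open Polynomial Finset

private lemma aux_reduce {L : Type*} [Ring L] {f : Polynomial L} (hf : f.Monic) {d : ℕ}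
    (hd : f.natDegree = d) (hd0 : 0 < d) (g : Polynomial L) :
    ∃ (q : Polynomial L) (a : ℕ → L),
      g = q * f + ∑ i ∈ Finset.range d, Polynomial.C (a i) * Polynomial.X ^ i := by
  suffices H : ∀ (n : ℕ) (g : Polynomial L), g.natDegree ≤ n →
      ∃ (q : Polynomial L) (a : ℕ → L), g = q * f + ∑ i ∈ Finset.range d, C (a i) * X ^ i from
    H _ g le_rfl
  intro n
  induction n with
  | zero =>
    intro g hg
    refine ⟨0, g.coeff, ?_⟩
    rw [zero_mul, zero_add]
    have hlt : g.natDegree < d := lt_of_le_of_lt hg hd0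
    calc g = ∑ i ∈ range d, monomial i (g.coeff i) := g.as_sum_range' d hlt
      _ = ∑ i ∈ range d, C (g.coeff i) * X ^ i := by
          exact Finset.sum_congr rfl fun i _ => (C_mul_X_pow_eq_monomial).symm
  | succ n IH =>
    intro g hg
    by_cases hlt : g.natDegree < d
    · refine ⟨0, g.coeff, ?_⟩
      rw [zero_mul, zero_add]
      calc g = ∑ i ∈ range d, monomial i (g.coeff i) := g.as_sum_range' d hlt
        _ = ∑ i ∈ range d, C (g.coeff i) * X ^ i := by
            exact Finset.sum_congr rfl fun i _ => (C_mul_X_pow_eq_monomial).symm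
    · push_neg at hlt
      set m := g.natDegree with hm
      set p : Polynomial L := C g.leadingCoeff * (X ^ (m - d) * f) with hp
      have hcp : ∀ k, m ≤ k → (g - p).coeff k = 0 := by
        intro k hk
        have hidx : k - (m - d) + (m - d) = k := by omega
        have hXf : (X ^ (m - d) * f).coeff k = f.coeff (k - (m - d)) := by
          conv_lhs => rw [← hidx]
          exact coeff_X_pow_mul f (m - d) (k - (m - d))
        have hpk : p.coeff k = g.leadingCoeff * f.coeff (k - (m - d)) := by
          rw [hp, coeff_C_mul, hXf]
        rcases eq_or_lt_of_le hk with h | h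
        · have hkd : k - (m - d) = d := by omega
          have : f.coeff (k - (m - d)) = 1 := by
            rw [hkd, ← hd]; exact hf.coeff_natDegree
          rw [coeff_sub, hpk, this, mul_one, ← h]
          exact sub_eq_zero_of_eq rfl
        · have h1 : g.coeff k = 0 := coeff_eq_zero_of_natDegree_lt h
          have h2 : f.coeff (k - (m - d)) = 0 := by
            apply coeff_eq_zero_of_natDegree_lt
            omega
          rw [coeff_sub, hpk, h1, h2, mul_zero, sub_zero]
      have hnd : (g - p).natDegree ≤ n := by
        by_cases h0 : g - p = 0
        · simp [h0]
        · have := (natDegree_lt_iff_degree_lt h0).2 ((degree_lt_iff_coeff_zero _ _).2 hcp)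
          omega
      obtain ⟨q, a, hqa⟩ := IH (g - p) hnd
      refine ⟨q + C g.leadingCoeff * X ^ (m - d), a, ?_⟩
      have hexp : (q + C g.leadingCoeff * X ^ (m - d)) * f + ∑ i ∈ range d, C (a i) * X ^ i
          = (q * f + ∑ i ∈ range d, C (a i) * X ^ i) + C g.leadingCoeff * (X ^ (m - d) * f) := by
        noncomm_ring
      rw [hexp, ← hqa, hp]
      exact (sub_add_cancel g p).symm

/-- A "good representation": an element written with integral coefficients. -/
private abbrev GoodRep {L M : Type*} [DivisionRing L] [AddCommGroup M] [Module L M]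
    (v : L → WithTop ℤ) (d : ℕ) (e : ℕ → M) (m : M) : Prop :=
  ∃ a : ℕ → L, (∀ i, (0 : WithTop ℤ) ≤ v (a i)) ∧ (∀ i, d ≤ i → a i = 0) ∧
    m = ∑ i ∈ Finset.range d, a i • e i

private lemma goodRep_def {L M : Type*} [DivisionRing L] [AddCommGroup M] [Module L M]
    (v : L → WithTop ℤ) (d : ℕ) (e : ℕ → M) (m : M) :
    GoodRep v d e m ↔ ∃ a : ℕ → L, (∀ i, (0 : WithTop ℤ) ≤ v (a i)) ∧
      (∀ i, d ≤ i → a i = 0) ∧ m = ∑ i ∈ Finset.range d, a i • e i := Iff.rfl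

/-- Let `f` be monic with a single-edge Newton polygon of positive slope,
`M = L[t]/L[t]f`, and `Λ` an `O`-lattice in `M`.  Then there exists `k₀ ≥ 0` such
that `tᵏΛ ⊇ σ⁻¹Λ` for all `k ≥ k₀`. -/
theorem stmt16 {L M : Type*} [DivisionRing L]
    [AddCommGroup M] [Module (Polynomial L) M] [Module L M]
    (hcompat : ∀ (a : L) (m : M), a • m = (Polynomial.C a : Polynomial L) • m)
    (v : L → WithTop ℤ)
    (hv0 : ∀ x : L, v x = ⊤ ↔ x = 0)
    (hadd : ∀ x y : L, min (v x) (v y) ≤ v (x + y))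
    (hmul : ∀ x y : L, v (x * y) = v x + v y)
    (hcomplete : ∀ x : ℕ → L,
      (∀ M' : ℤ, ∃ N : ℕ, ∀ n ≥ N, (M' : WithTop ℤ) ≤ v (x n)) →
      ∃ t : L, ∀ M' : ℤ, ∃ N : ℕ, ∀ n ≥ N,
        (M' : WithTop ℤ) ≤ v (t - ∑ i ∈ Finset.range n, x i))
    (O : Subring L) (hO : (O : Set L) = {x : L | 0 ≤ v x})
    (σ : L) (hσ : v σ = 1)
    (f : Polynomial L) (hmonic : f.Monic) (d : ℕ) (hd : f.natDegree = d) (hd0 : 0 < d)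
    (s : ℝ) (hs : 0 < s)
    (hedge : ∀ x ∈ Set.Icc (0 : ℝ) (d : ℝ), NP v f x = ((s * (x - (d : ℝ)) : ℝ) : EReal))
    (hiso : Nonempty (M ≃ₗ[Polynomial L]
      (Polynomial L ⧸ Submodule.span (Polynomial L) {f})))
    (Λ : Submodule ↥O M) (hfg : Λ.FG)
    (hbasis : ∃ (n : ℕ) (b : Module.Basis (Fin n) L M), ∀ i, b i ∈ Λ) :
    ∃ k₀ : ℕ, ∀ k ≥ k₀,
      (fun m : M => σ⁻¹ • m) '' (Λ : Set M) ⊆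
        (fun m : M => ((Polynomial.X : Polynomial L) ^ k) • m) '' (Λ : Set M) := by
  classical
  ----------------------------------------------------------------
  -- Part 0 : elementary valuation facts
  ----------------------------------------------------------------
  have h1 : v 1 = 0 := by
    have h := hmul 1 1
    rw [one_mul] at h
    have hne : v (1 : L) ≠ ⊤ := by simp [hv0]
    obtain ⟨z, hz⟩ := WithTop.ne_top_iff_exists.1 hne
    rw [← hz] at h ⊢
    have : z = z + z := by exact_mod_cast h
    have : z = 0 := by omega
    simp [this]
  have hvneg : ∀ x : L, v (-x) = v x := by
    have hm1 : v (-1 : L) = 0 := by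
      have h := hmul (-1 : L) (-1)
      rw [neg_mul_neg, one_mul, h1] at h
      have hne : v (-1 : L) ≠ ⊤ := by simp [hv0]
      obtain ⟨z, hz⟩ := WithTop.ne_top_iff_exists.1 hne
      rw [← hz]
      rw [← hz] at h
      have : (0 : ℤ) = z + z := by exact_mod_cast h
      have : z = 0 := by omega
      simp [this]
    intro x
    have := hmul (-1 : L) x
    rw [neg_one_mul, hm1, zero_add] at this
    exact this
  have hvinv : ∀ (x : L) (z : ℤ), x ≠ 0 → v x = (z : WithTop ℤ) →
      v x⁻¹ = ((-z : ℤ) : WithTop ℤ) := by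
    intro x z hx hxz
    have h := hmul x⁻¹ x
    rw [inv_mul_cancel₀ hx, h1, hxz] at h
    have hne : v x⁻¹ ≠ ⊤ := fun h' => (inv_ne_zero hx) ((hv0 _).1 h')
    obtain ⟨y, hy⟩ := WithTop.ne_top_iff_exists.1 hne
    rw [← hy] at h ⊢
    have : (0 : ℤ) = y + z := by exact_mod_cast h
    have : y = -z := by omega
    exact WithTop.coe_inj.mpr this
  have hσ0 : σ ≠ 0 := by
    intro h
    rw [h, (hv0 (0 : L)).2 rfl] at hσ
    exact (by simp : (⊤ : WithTop ℤ) ≠ 1) hσ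
  have hσ1 : v σ = ((1 : ℤ) : WithTop ℤ) := by exact_mod_cast hσ
  have hvσinv : v σ⁻¹ = ((-1 : ℤ) : WithTop ℤ) := hvinv σ 1 hσ0 hσ1
  have hvσpow : ∀ k : ℕ, v (σ ^ k) = ((k : ℤ) : WithTop ℤ) := by
    intro k
    induction k with
    | zero => simpa using h1
    | succ k ih =>
      rw [pow_succ, hmul, ih, hσ1, ← WithTop.coe_add]
      push_cast
      ring_nf
  have hOmem : ∀ x : L, 0 ≤ v x → x ∈ O := by
    intro x hx
    rw [← SetLike.mem_coe, hO]
    exact hx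
  have hσO : σ ∈ O := hOmem σ (by rw [hσ]; exact zero_le_one)
  ----------------------------------------------------------------
  -- Part 1 : Newton polygon consequences
  ----------------------------------------------------------------
  have hlow : ∀ i ∈ f.support, ((s * ((i : ℝ) - d) : ℝ) : EReal) ≤ evv v (f.coeff i) := by
    intro i hi
    have hid : ((i : ℝ)) ∈ Set.Icc (0 : ℝ) (d : ℝ) := by
      constructor
      · positivity
      · have : i ≤ d := hd ▸ le_natDegree_of_mem_supp i hi
        exact_mod_cast this
    have h := hedge i hid
    rw [NP] at h
    rw [← h]
    apply sSup_le
    rintro y ⟨a, b, hab, rfl⟩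
    exact hab i hi
  have hline : ∀ b : ℝ, ((b : ℝ) : EReal) ≤ evv v (f.coeff 0) →
      ∃ a : ℝ, ∀ i ∈ f.support, ((a * (i : ℝ) + b : ℝ) : EReal) ≤ evv v (f.coeff i) := by
    intro b hb
    set r : ℕ → ℝ := fun i => (((v (f.coeff i)).untopD 0 : ℤ) : ℝ) with hr
    obtain ⟨A, hA⟩ := ((f.support.erase 0).image (fun i => (b - r i) / (i : ℝ))).exists_le
    refine ⟨-A, ?_⟩
    intro i hi
    by_cases hi0 : i = 0
    · subst hi0
      have : ((-A * ((0 : ℕ) : ℝ) + b : ℝ) : EReal) = ((b : ℝ) : EReal) := by norm_num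
      rw [this]; exact hb
    · have hne : v (f.coeff i) ≠ ⊤ := by
        simp only [ne_eq, hv0]
        exact mem_support_iff.1 hi
      obtain ⟨z, hz⟩ := WithTop.ne_top_iff_exists.1 hne
      have hrz : r i = (z : ℝ) := by
        rw [hr]; simp only [← hz, WithTop.untopD_coe]
      have hevv : evv v (f.coeff i) = ((z : ℝ) : EReal) := by
        rw [evv, ← hz]; rfl
      rw [hevv]
      have hipos : (0 : ℝ) < (i : ℝ) := by
        exact_mod_cast Nat.pos_of_ne_zero hi0
      have hmem : (b - r i) / (i : ℝ) ≤ A :=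
        hA _ (Finset.mem_image_of_mem _ (Finset.mem_erase.2 ⟨hi0, hi⟩))
      have : -A * (i : ℝ) + b ≤ (z : ℝ) := by
        rw [div_le_iff₀ hipos] at hmem
        rw [← hrz]
        nlinarith
      exact_mod_cast this
  have hc0 : f.coeff 0 ≠ 0 := by
    intro h0
    have hb : ((s * ((0:ℝ) - d) + 1 : ℝ) : EReal) ≤ evv v (f.coeff 0) := by
      rw [evv, h0, (hv0 (0 : L)).2 rfl]
      exact le_top
    obtain ⟨a, ha⟩ := hline _ hb
    have hmem : ((a * (0:ℝ) + (s * ((0:ℝ) - d) + 1) : ℝ) : EReal) ∈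
        {y : EReal | ∃ a' b' : ℝ,
          (∀ i ∈ f.support, ((a' * i + b' : ℝ) : EReal) ≤ evv v (f.coeff i)) ∧
          y = ((a' * (0:ℝ) + b' : ℝ) : EReal)} := ⟨a, _, ha, rfl⟩
    have hle := le_sSup hmem
    rw [← NP] at hle
    rw [hedge 0 (by constructor <;> [rfl; positivity])] at hle
    have : a * (0:ℝ) + (s * ((0:ℝ) - d) + 1) ≤ s * ((0:ℝ) - d) := by exact_mod_cast hle
    linarith
  obtain ⟨n₀, hn₀⟩ := WithTop.ne_top_iff_exists.1 ((fun h => hc0 ((hv0 _).1 h)) :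
    v (f.coeff 0) ≠ ⊤)
  have hn0le : (n₀ : ℝ) ≤ s * ((0:ℝ) - d) := by
    have hb : (((n₀ : ℝ)) : EReal) ≤ evv v (f.coeff 0) := by
      have : evv v (f.coeff 0) = (((n₀ : ℝ)) : EReal) := by rw [evv, ← hn₀]; rfl
      rw [this]
    obtain ⟨a, ha⟩ := hline _ hb
    have hmem : ((a * (0:ℝ) + (n₀ : ℝ) : ℝ) : EReal) ∈
        {y : EReal | ∃ a' b' : ℝ,
          (∀ i ∈ f.support, ((a' * i + b' : ℝ) : EReal) ≤ evv v (f.coeff i)) ∧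
          y = ((a' * (0:ℝ) + b' : ℝ) : EReal)} := ⟨a, _, ha, rfl⟩
    have hle := le_sSup hmem
    rw [← NP, hedge 0 (by constructor <;> [rfl; positivity])] at hle
    have : a * (0:ℝ) + (n₀ : ℝ) ≤ s * ((0:ℝ) - d) := by exact_mod_cast hle
    linarith
  have hvinv0 : v (f.coeff 0)⁻¹ = ((-n₀ : ℤ) : WithTop ℤ) := hvinv _ n₀ hc0 hn₀.symm
  have hb1 : ∀ i : ℕ, (1 : WithTop ℤ) ≤ v (-((f.coeff 0)⁻¹ * f.coeff (i + 1))) := by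
    intro i
    rw [hvneg]
    by_cases hz : f.coeff (i + 1) = 0
    · rw [hz, mul_zero, (hv0 (0:L)).2 rfl]; exact le_top
    · have hsupp : i + 1 ∈ f.support := mem_support_iff.2 hz
      obtain ⟨z, hz'⟩ := WithTop.ne_top_iff_exists.1
        ((fun h => hz ((hv0 _).1 h)) : v (f.coeff (i+1)) ≠ ⊤)
      have hlo := hlow (i + 1) hsupp
      have hev : evv v (f.coeff (i+1)) = (((z : ℝ)) : EReal) := by rw [evv, ← hz']; rfl
      rw [hev] at hlo
      have hlo' : s * (((i+1 : ℕ) : ℝ) - (d : ℝ)) ≤ (z : ℝ) := by exact_mod_cast hlo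
      rw [hmul, hvinv0, ← hz']
      have hgoal : (1 : ℤ) ≤ -n₀ + z := by
        have hpos : (0 : ℝ) < ((-n₀ : ℤ) : ℝ) + (z : ℝ) := by
          have h1' : s * (((i+1:ℕ):ℝ)) > 0 := by positivity
          push_cast
          push_cast at hlo'
          nlinarith
        have : (0 : ℤ) < -n₀ + z := by exact_mod_cast hpos
        omega
      exact_mod_cast hgoal
  ----------------------------------------------------------------
  -- Part 2 : quotient presentation
  ----------------------------------------------------------------
  obtain ⟨Ψ, hΨsurj, hΨf⟩ : ∃ Ψ : Polynomial L →ₗ[Polynomial L] M,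
      Function.Surjective Ψ ∧ Ψ f = 0 := by
    obtain ⟨φ⟩ := hiso
    refine ⟨(φ.symm.toLinearMap).comp (Submodule.span (Polynomial L) {f}).mkQ, ?_, ?_⟩
    · exact φ.symm.surjective.comp (Submodule.mkQ_surjective _)
    · simp only [LinearMap.comp_apply, Submodule.mkQ_apply]
      rw [(Submodule.Quotient.mk_eq_zero _).2 (Submodule.mem_span_singleton_self f)]
      simp
  have hΨqf : ∀ q : Polynomial L, Ψ (q * f) = 0 := by
    intro q
    rw [← smul_eq_mul, map_smul, hΨf, smul_zero]
  have hΨC : ∀ (z : L) (g : Polynomial L), z • Ψ g = Ψ (C z * g) := by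
    intro z g
    rw [hcompat, ← map_smul, smul_eq_mul]
  set e : ℕ → M := fun i => Ψ (X ^ i) with he
  have hcomm : ∀ (k : ℕ) (z : L) (m : M),
      (X ^ k : Polynomial L) • (z • m) = z • ((X ^ k : Polynomial L) • m) := by
    intro k z m
    rw [hcompat, hcompat, ← mul_smul, ← mul_smul, X_pow_mul]
  have hcomm1 : ∀ (z : L) (m : M), (X : Polynomial L) • (z • m) = z • ((X : Polynomial L) • m) := by
    intro z m
    have := hcomm 1 z m
    rwa [pow_one] at this
  have hXe : ∀ i, (X : Polynomial L) • e i = e (i + 1) := by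
    intro i
    rw [he]
    simp only
    rw [← map_smul, smul_eq_mul, ← pow_succ']
  have hsum : ∀ a : ℕ → L, ∑ i ∈ range d, a i • e i = Ψ (∑ i ∈ range d, C (a i) * X ^ i) := by
    intro a
    rw [map_sum]
    exact Finset.sum_congr rfl fun i _ => hΨC (a i) (X ^ i)
  set bc : ℕ → L := fun i => -((f.coeff 0)⁻¹ * f.coeff (i + 1)) with hbc
  have hbc1 : ∀ i : ℕ, (1 : WithTop ℤ) ≤ v (bc i) := fun i => hb1 i
  set w : M := Ψ (∑ i ∈ range d, C (bc i) * X ^ i) with hw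
  have hfsplit : f = C (f.coeff 0) + ∑ i ∈ range d, C (f.coeff (i + 1)) * X ^ (i + 1) := by
    have h0 : f = ∑ i ∈ range (d + 1), C (f.coeff i) * X ^ i := by
      calc f = ∑ i ∈ range (d + 1), monomial i (f.coeff i) :=
          f.as_sum_range' (d + 1) (by omega)
        _ = _ := Finset.sum_congr rfl fun i _ => (C_mul_X_pow_eq_monomial).symm
    rw [Finset.sum_range_succ'] at h0
    conv_lhs => rw [h0]
    rw [pow_zero, mul_one, add_comm]
  have hXw : (X : Polynomial L) • w = e 0 := by
    rw [hw, ← map_smul, smul_eq_mul]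
    have hXh : (X : Polynomial L) * (∑ i ∈ range d, C (bc i) * X ^ i)
        = 1 - C (f.coeff 0)⁻¹ * f := by
      have h1' : (X : Polynomial L) * (∑ i ∈ range d, C (bc i) * X ^ i)
          = ∑ i ∈ range d, C (bc i) * X ^ (i + 1) := by
        rw [Finset.mul_sum]
        refine Finset.sum_congr rfl fun i _ => ?_
        rw [← mul_assoc, X_mul, mul_assoc, ← pow_succ']
      rw [h1']
      have h2 : ∀ i ∈ range d, C (bc i) * X ^ (i+1)
          = -(C (f.coeff 0)⁻¹ * (C (f.coeff (i+1)) * X ^ (i+1))) := by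
        intro i _
        rw [hbc]
        simp only [map_neg, map_mul]
        noncomm_ring
      rw [Finset.sum_congr rfl h2, Finset.sum_neg_distrib, ← Finset.mul_sum]
      have h3 : ∑ i ∈ range d, C (f.coeff (i+1)) * X ^ (i+1) = f - C (f.coeff 0) := by
        rw [eq_sub_iff_add_eq, add_comm]; exact hfsplit.symm
      rw [h3, mul_sub, ← map_mul, inv_mul_cancel₀ hc0, map_one, neg_sub]
    rw [hXh, map_sub, hΨqf, sub_zero]
    show Ψ 1 = Ψ (X ^ 0)
    rw [pow_zero]
  have hbcz : ∀ i, d ≤ i → bc i = 0 := by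
    intro i hi
    show -((f.coeff 0)⁻¹ * f.coeff (i + 1)) = 0
    have hlt : f.natDegree < i + 1 := by rw [hd]; omega
    rw [coeff_eq_zero_of_natDegree_lt hlt, mul_zero, neg_zero]
  ----------------------------------------------------------------
  -- Part 3 : spanning and the step lemma
  ----------------------------------------------------------------
  have hspan : ∀ m : M, ∃ a : ℕ → L, m = ∑ i ∈ range d, a i • e i := by
    intro m
    obtain ⟨g, hg⟩ := hΨsurj m
    obtain ⟨q, a, hqa⟩ := aux_reduce hmonic hd hd0 g
    refine ⟨a, ?_⟩
    rw [hsum, ← hg, hqa, map_add, hΨqf, zero_add]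
  have hsplit1 : ∀ F : ℕ → M, ∑ i ∈ range d, F i = F 0 + ∑ i ∈ range (d-1), F (i+1) := by
    intro F
    conv_lhs => rw [show d = (d-1)+1 by omega]
    rw [Finset.sum_range_succ', add_comm]
  have hsplit2 : ∀ F : ℕ → M, ∑ i ∈ range d, F i = (∑ i ∈ range (d-1), F i) + F (d-1) := by
    intro F
    conv_lhs => rw [show d = (d-1)+1 by omega]
    rw [Finset.sum_range_succ]
  have hweq : w = ∑ i ∈ range d, bc i • e i := by rw [hsum]
  have hstep : ∀ a : ℕ → L, (∀ i, d ≤ i → a i = 0) →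
      (X : Polynomial L) • (∑ i ∈ range d, (a (i+1) + a 0 * bc i) • e i)
        = ∑ i ∈ range d, a i • e i := by
    intro a ha
    have hdec : (∑ i ∈ range d, (a (i+1) + a 0 * bc i) • e i)
        = (∑ i ∈ range d, a (i+1) • e i) + a 0 • w := by
      rw [hweq, Finset.smul_sum, ← Finset.sum_add_distrib]
      refine Finset.sum_congr rfl fun i _ => ?_
      rw [add_smul, smul_smul]
    rw [hdec, smul_add]
    have h1' : (X : Polynomial L) • (∑ i ∈ range d, a (i+1) • e i)
        = ∑ i ∈ range d, a (i+1) • e (i+1) := by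
      rw [Finset.smul_sum]
      refine Finset.sum_congr rfl fun i _ => ?_
      rw [hcomm1, hXe]
    have h2' : (X : Polynomial L) • (a 0 • w) = a 0 • e 0 := by
      rw [hcomm1, hXw]
    rw [h1', h2']
    rw [hsplit2 (fun i => a (i+1) • e (i+1))]
    rw [show (d-1)+1 = d by omega, ha d le_rfl, zero_smul, add_zero]
    rw [hsplit1 (fun i => a i • e i)]
    rw [add_comm]
  ----------------------------------------------------------------
  -- Part 4 : contraction
  ----------------------------------------------------------------
  have hvzero : (0 : WithTop ℤ) ≤ v 0 := by rw [(hv0 (0:L)).2 rfl]; exact le_top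
  have hcontract : ∀ (j : ℕ) (a : ℕ → L), (∀ i, (0:WithTop ℤ) ≤ v (a i)) →
      (∀ i, d ≤ i → a i = 0) →
      ∃ a' : ℕ → L, (∀ i, (0:WithTop ℤ) ≤ v (a' i)) ∧ (∀ i, d ≤ i → a' i = 0) ∧
        (∀ i, d - j ≤ i → (1:WithTop ℤ) ≤ v (a' i)) ∧
        (X ^ j : Polynomial L) • (∑ i ∈ range d, a' i • e i) = ∑ i ∈ range d, a i • e i := by
    intro j
    induction j with
    | zero =>
      intro a h0 hz
      refine ⟨a, h0, hz, ?_, by rw [pow_zero, one_smul]⟩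
      intro i hi
      rw [hz i (by omega)]
      rw [(hv0 (0:L)).2 rfl]
      exact le_top
    | succ j ih =>
      intro a h0 hz
      obtain ⟨a', h0', hz', h1', heq'⟩ := ih a h0 hz
      refine ⟨fun i => a' (i+1) + a' 0 * bc i, ?_, ?_, ?_, ?_⟩
      · intro i
        beta_reduce
        refine le_trans ?_ (hadd _ _)
        refine le_min (h0' (i+1)) ?_
        rw [hmul]
        calc (0 : WithTop ℤ) = 0 + 0 := by rw [add_zero]
          _ ≤ v (a' 0) + v (bc i) := add_le_add (h0' 0) (le_trans (by norm_num) (hbc1 i))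
      · intro i hi
        beta_reduce
        rw [hz' (i+1) (by omega), hbcz i hi, mul_zero, zero_add]
      · intro i hi
        beta_reduce
        refine le_trans ?_ (hadd _ _)
        refine le_min ?_ ?_
        · exact h1' (i+1) (by omega)
        · rw [hmul]
          calc (1 : WithTop ℤ) = 0 + 1 := by rw [zero_add]
            _ ≤ v (a' 0) + v (bc i) := add_le_add (h0' 0) (hbc1 i)
      · beta_reduce
        rw [pow_succ, mul_smul, hstep a' hz', heq']
  ----------------------------------------------------------------
  -- Part 5 : inverse powers of X on good representations
  ----------------------------------------------------------------
  have hCd : ∀ m : M, GoodRep v d e m →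
      ∃ m' : M, GoodRep v d e m' ∧ (X ^ d : Polynomial L) • m' = σ⁻¹ • m := by
    rintro m ⟨a, h0, hz, rfl⟩
    obtain ⟨a', h0', hz', h1', heq'⟩ := hcontract d a h0 hz
    refine ⟨∑ i ∈ range d, (σ⁻¹ * a' i) • e i, ⟨fun i => σ⁻¹ * a' i, ?_, ?_, rfl⟩, ?_⟩
    · intro i
      beta_reduce
      rw [hmul, hvσinv]
      have hminus : ((-1 : ℤ) : WithTop ℤ) + ((1 : ℤ) : WithTop ℤ) = 0 := by
        rw [← WithTop.coe_add]; norm_num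
      calc (0 : WithTop ℤ) = ((-1 : ℤ) : WithTop ℤ) + ((1 : ℤ) : WithTop ℤ) := hminus.symm
        _ ≤ _ := add_le_add le_rfl (by exact_mod_cast h1' i (by omega))
    · intro i hi
      beta_reduce
      rw [hz' i hi, mul_zero]
    · have : (∑ i ∈ range d, (σ⁻¹ * a' i) • e i) = σ⁻¹ • ∑ i ∈ range d, a' i • e i := by
        rw [Finset.smul_sum]
        exact Finset.sum_congr rfl fun i _ => (smul_smul _ _ _).symm
      rw [this, hcomm, heq']
  have hCone : ∀ m : M, GoodRep v d e m →
      ∃ m' : M, GoodRep v d e m' ∧ (X : Polynomial L) • m' = m := by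
    rintro m ⟨a, h0, hz, rfl⟩
    obtain ⟨a', h0', hz', _, heq'⟩ := hcontract 1 a h0 hz
    refine ⟨∑ i ∈ range d, a' i • e i, ⟨a', h0', hz', rfl⟩, ?_⟩
    rw [← heq', pow_one]
  have hCmul : ∀ (j : ℕ) (m : M), GoodRep v d e m →
      ∃ m' : M, GoodRep v d e m' ∧
        (X ^ (j * d) : Polynomial L) • m' = (σ⁻¹) ^ j • m := by
    intro j
    induction j with
    | zero =>
      intro m hm
      refine ⟨m, hm, ?_⟩
      rw [zero_mul, pow_zero, one_smul, pow_zero, one_smul]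
    | succ j ih =>
      intro m hm
      obtain ⟨m₁, hm₁, heq₁⟩ := hCd m hm
      obtain ⟨m₂, hm₂, heq₂⟩ := ih m₁ hm₁
      refine ⟨m₂, hm₂, ?_⟩
      have hpow : ((j+1) * d) = d + j * d := by ring
      rw [hpow, pow_add, mul_smul, heq₂, hcomm, heq₁, smul_smul, ← pow_succ]
  have hCany : ∀ (r : ℕ) (m : M), GoodRep v d e m →
      ∃ m' : M, GoodRep v d e m' ∧ (X ^ r : Polynomial L) • m' = m := by
    intro r
    induction r with
    | zero => intro m hm; exact ⟨m, hm, by rw [pow_zero, one_smul]⟩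
    | succ r ih =>
      intro m hm
      obtain ⟨m₁, hm₁, heq₁⟩ := ih m hm
      obtain ⟨m₂, hm₂, heq₂⟩ := hCone m₁ hm₁
      refine ⟨m₂, hm₂, ?_⟩
      rw [pow_succ, mul_smul, heq₂, heq₁]
  have hCfull : ∀ (k : ℕ) (m : M), GoodRep v d e m →
      ∃ m' : M, GoodRep v d e m' ∧
        (X ^ k : Polynomial L) • m' = (σ⁻¹) ^ (k / d) • m := by
    intro k m hm
    obtain ⟨m₁, hm₁, heq₁⟩ := hCmul (k / d) m hm
    obtain ⟨m₂, hm₂, heq₂⟩ := hCany (k % d) m₁ hm₁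
    refine ⟨m₂, hm₂, ?_⟩
    have hk : (k / d) * d + k % d = k := by
      rw [mul_comm]; exact Nat.div_add_mod k d
    conv_lhs => rw [← hk]
    rw [pow_add, mul_smul, heq₂, heq₁]
  ----------------------------------------------------------------
  -- Part 6 : comparison of the lattice with good representations
  ----------------------------------------------------------------
  have hbound : ∀ V : Finset (WithTop ℤ), ∃ N : ℕ,
      ∀ x ∈ V, (0 : WithTop ℤ) ≤ ((N : ℤ) : WithTop ℤ) + x := by
    intro V
    induction V using Finset.induction_on with
    | empty => exact ⟨0, by simp⟩
    | @insert x V hxV ih =>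
      obtain ⟨N, hN⟩ := ih
      by_cases hxt : x = ⊤
      · refine ⟨N, ?_⟩
        intro y hy
        rcases Finset.mem_insert.1 hy with h | h
        · rw [h, hxt]; simp
        · exact hN y h
      · obtain ⟨z, hz⟩ := WithTop.ne_top_iff_exists.1 hxt
        refine ⟨max N z.natAbs, ?_⟩
        intro y hy
        rcases Finset.mem_insert.1 hy with h | h
        · rw [h, ← hz, ← WithTop.coe_add]
          have : (0:ℤ) ≤ ((max N z.natAbs : ℕ) : ℤ) + z := by omega
          exact_mod_cast this
        · refine le_trans (hN y h) (add_le_add_left ?_ y)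
          have : (N : ℤ) ≤ ((max N z.natAbs : ℕ) : ℤ) := by omega
          exact_mod_cast this
  -- closure properties of good representations
  have hGzero : GoodRep v d e 0 := by
    refine ⟨fun _ => 0, fun _ => hvzero, fun _ _ => rfl, ?_⟩
    simp
  have hGadd : ∀ m₁ m₂ : M, GoodRep v d e m₁ → GoodRep v d e m₂ → GoodRep v d e (m₁ + m₂) := by
    rintro m₁ m₂ ⟨a₁, h₁0, h₁z, rfl⟩ ⟨a₂, h₂0, h₂z, rfl⟩
    refine ⟨fun i => a₁ i + a₂ i, ?_, ?_, ?_⟩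
    · intro i
      beta_reduce
      exact le_trans (le_min (h₁0 i) (h₂0 i)) (hadd _ _)
    · intro i hi
      beta_reduce
      rw [h₁z i hi, h₂z i hi, add_zero]
    · rw [← Finset.sum_add_distrib]
      exact Finset.sum_congr rfl fun i _ => (add_smul _ _ _).symm
  have hGsmul : ∀ z : L, (0 : WithTop ℤ) ≤ v z → ∀ m : M,
      GoodRep v d e m → GoodRep v d e (z • m) := by
    rintro z hvz m ⟨a, h0, haz, rfl⟩
    refine ⟨fun i => z * a i, ?_, ?_, ?_⟩
    · intro i
      beta_reduce
      rw [hmul]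
      exact add_nonneg hvz (h0 i)
    · intro i hi
      beta_reduce
      rw [haz i hi, mul_zero]
    · beta_reduce
      rw [Finset.smul_sum]
      exact Finset.sum_congr rfl fun i _ => smul_smul _ _ _
  choose rep hrep using hspan
  obtain ⟨S, hS⟩ := hfg
  obtain ⟨N, hN⟩ := hbound ((S ×ˢ range d).image fun p => v (rep p.1 p.2))
  have hL1 : ∀ m ∈ Λ, GoodRep v d e (σ ^ N • m) := by
    intro m hm
    rw [← hS] at hm
    obtain ⟨r, -, hr⟩ := Submodule.mem_span_finset.1 hm
    rw [← hr, Finset.smul_sum]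
    refine Finset.sum_induction _ _ hGadd hGzero ?_
    intro g hg
    have hgrep : GoodRep v d e (σ ^ N • g) := by
      refine ⟨fun i => if i < d then σ ^ N * rep g i else 0, ?_, ?_, ?_⟩
      · intro i
        beta_reduce
        by_cases hi : i < d
        · rw [if_pos hi, hmul, hvσpow]
          have hpair : (g, i) ∈ S ×ˢ range d :=
            Finset.mem_product.2 ⟨hg, Finset.mem_range.2 hi⟩
          exact hN _ (Finset.mem_image_of_mem _ hpair)
        · rw [if_neg hi]; exact hvzero
      · intro i hi
        beta_reduce
        rw [if_neg (by omega)]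
      · show σ ^ N • g = ∑ i ∈ range d, (if i < d then σ ^ N * rep g i else 0) • e i
        conv_lhs => rw [hrep g]
        rw [Finset.smul_sum]
        refine Finset.sum_congr rfl fun i hi => ?_
        rw [if_pos (Finset.mem_range.1 hi), smul_smul]
    have hrg : (0 : WithTop ℤ) ≤ v (r g : L) := by
      have h2 := (r g).2
      rw [← SetLike.mem_coe, hO] at h2
      exact h2
    have hvz : (0 : WithTop ℤ) ≤ v (σ ^ N * (r g : L) * (σ ^ N)⁻¹) := by
      rw [hmul, hmul, hvσpow, hvinv (σ ^ N) N (pow_ne_zero _ hσ0) (hvσpow N)]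
      calc (0 : WithTop ℤ) ≤ v (r g : L) := hrg
        _ = (((N : ℤ) : WithTop ℤ) + v (r g : L)) + ((-(N:ℤ) : ℤ) : WithTop ℤ) := by
            rw [add_comm (((N : ℤ) : WithTop ℤ)), add_assoc, ← WithTop.coe_add]
            norm_num
    have hzz : (σ ^ N * (r g : L) * (σ ^ N)⁻¹) • (σ ^ N • g) = σ ^ N • (r g • g) := by
      have hco : (r g • g : M) = ((r g : L)) • g := rfl
      rw [hco, smul_smul, smul_smul, mul_assoc (σ ^ N * (r g : L)),
        inv_mul_cancel₀ (pow_ne_zero _ hσ0), mul_one]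
    rw [← hzz]
    exact hGsmul _ hvz _ hgrep
  obtain ⟨nb, bb, hbb⟩ := hbasis
  obtain ⟨N', hN'⟩ := hbound ((range d ×ˢ (Finset.univ : Finset (Fin nb))).image
    fun p => v (bb.repr (e p.1) p.2))
  have hL2 : ∀ m : M, GoodRep v d e m → σ ^ N' • m ∈ Λ := by
    rintro m ⟨a, h0, hz, rfl⟩
    rw [Finset.smul_sum]
    refine Submodule.sum_mem Λ ?_
    intro i hi
    have hsum2 : σ ^ N' • (a i • e i) = ∑ j, (σ ^ N' * a i * bb.repr (e i) j) • bb j := by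
      conv_lhs => rw [← bb.sum_repr (e i)]
      rw [Finset.smul_sum, Finset.smul_sum]
      refine Finset.sum_congr rfl fun j _ => ?_
      rw [smul_smul, smul_smul, mul_assoc]
    rw [hsum2]
    refine Submodule.sum_mem Λ ?_
    intro j _
    have hvz : (0 : WithTop ℤ) ≤ v (σ ^ N' * a i * bb.repr (e i) j) := by
      rw [hmul, hmul, hvσpow]
      have hpair : (i, j) ∈ range d ×ˢ (Finset.univ : Finset (Fin nb)) :=
        Finset.mem_product.2 ⟨hi, Finset.mem_univ j⟩
      calc (0 : WithTop ℤ) ≤ ((N' : ℤ) : WithTop ℤ) + v (bb.repr (e i) j) :=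
          hN' _ (Finset.mem_image_of_mem _ hpair)
        _ ≤ (((N' : ℤ) : WithTop ℤ) + v (a i)) + v (bb.repr (e i) j) :=
          add_le_add_left (le_add_of_nonneg_right (h0 i)) _
    have hcoe : ((⟨σ ^ N' * a i * bb.repr (e i) j, hOmem _ hvz⟩ : ↥O) • bb j : M)
        = (σ ^ N' * a i * bb.repr (e i) j) • bb j := rfl
    rw [← hcoe]
    exact Λ.smul_mem _ (hbb j)
  have hσΛ : ∀ (t : ℕ) (x : M), x ∈ Λ → σ ^ t • x ∈ Λ := by
    intro t x hx
    have hco : (((⟨σ, hσO⟩ : ↥O) ^ t) • x : M) = σ ^ t • x := by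
      have h2 : (((⟨σ, hσO⟩ : ↥O) ^ t : ↥O) : L) = σ ^ t := SubmonoidClass.coe_pow _ _
      calc (((⟨σ, hσO⟩ : ↥O) ^ t) • x : M) = ((((⟨σ, hσO⟩ : ↥O) ^ t : ↥O) : L)) • x := rfl
        _ = σ ^ t • x := by rw [h2]
    rw [← hco]
    exact Λ.smul_mem _ hx
  ----------------------------------------------------------------
  -- Part 7 : conclusion
  ----------------------------------------------------------------
  refine ⟨d * (N + N' + 2), ?_⟩
  intro k hk x hx
  obtain ⟨m, hmΛ, rfl⟩ := hx
  have hj : N + N' + 2 ≤ k / d := by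
    rw [Nat.le_div_iff_mul_le hd0]
    calc (N + N' + 2) * d = d * (N + N' + 2) := by ring
      _ ≤ k := hk
  obtain ⟨m₁, hm₁, heq₁⟩ := hCfull k (σ ^ N • m) (hL1 m hmΛ)
  have hmem₂ : σ ^ N' • m₁ ∈ Λ := hL2 m₁ hm₁
  refine ⟨σ ^ (k / d - 1 - N - N') • (σ ^ N' • m₁), hσΛ _ _ hmem₂, ?_⟩
  show (X ^ k : Polynomial L) • (σ ^ (k / d - 1 - N - N') • (σ ^ N' • m₁)) = σ⁻¹ • m
  rw [hcomm, hcomm, heq₁]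
  rw [smul_smul, smul_smul, smul_smul]
  congr 1
  rw [inv_pow, ← zpow_natCast σ (k / d - 1 - N - N'), ← zpow_natCast σ N',
    ← zpow_natCast σ N, ← zpow_natCast σ (k / d), ← zpow_neg,
    ← zpow_add₀ hσ0, ← zpow_add₀ hσ0, ← zpow_add₀ hσ0]
  have hexp : (↑(k / d - 1 - N - N') + ↑N' + -↑(k / d) + ↑N : ℤ) = -1 := by omega
  rw [hexp, zpow_neg_one]
end
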